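/- arXiv:2103.06683 — 7 statements merged into one kernel-verified Lean document; each statement's English description precedes it below -/
import Mathlib

section
/- For every n ≥ 2, the extended hypercube Q^ext_n is a median graph, and for any leaves x_i, x_j with i ≠ j and x_k, x_l with k ≠ l such that {i,j} ≠ {k,l}, the medians satisfy med(ρ, x_i, x_j) ≠ med(ρ, x_k, x_l), where ρ is the root of Q^ext_n. -/
/-- `m` is a median of the triple `u, v, w` in `G`. -/
def IsMedianVtx {V : Type*} (G : SimpleGraph V) (u v w m : V) : Prop :=
  G.dist u m + G.dist m v = G.dist u v ∧
  G.dist v m + G.dist m w = G.dist v w ∧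
  G.dist u m + G.dist m w = G.dist u w

/-- A median graph: a connected graph in which every triple of vertices has a
unique median. -/
def IsMedianGraph {V : Type*} (G : SimpleGraph V) : Prop :=
  G.Connected ∧ ∀ u v w : V, ∃! m : V, IsMedianVtx G u v w m

/-- The `i`-th standard unit vector of `{0,1}^n`: the vertex whose `i`-th
coordinate is `1` and all other coordinates are `0`. -/
def unitVec (n : ℕ) (i : Fin n) : Fin n → Bool := fun j => if j = i then true else false

/-- The extended hypercube `Q^ext_n`: the hypercube `Q_n` on `{0,1}^n` (edges between
vertices at Hamming distance `1`), together with `n` additional leaves `x_1, …, x_n`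
(encoded as `Sum.inr i`), where `x_i` is adjacent exactly to the unit vector `e_i`. -/
def extHypercube (n : ℕ) : SimpleGraph ((Fin n → Bool) ⊕ Fin n) where
  Adj x y :=
    match x, y with
    | Sum.inl a, Sum.inl b => hammingDist a b = 1
    | Sum.inl a, Sum.inr i => a = unitVec n i
    | Sum.inr i, Sum.inl a => a = unitVec n i
    | Sum.inr _, Sum.inr _ => False
  symm := by
    constructor
    rintro (a | i) (b | j) h
    · show hammingDist b a = 1
      rw [hammingDist_comm]
      exact h
    · exact h
    · exact h
    · exact h
  loopless := by
    constructor
    rintro (a | i) h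
    · have h' : hammingDist a a = 1 := h
      rw [hammingDist_self] at h'
      exact one_ne_zero h'.symm
    · exact h

/-- The root of the extended hypercube: the all-ones vertex `(1, …, 1)`. -/
def qRoot (n : ℕ) : (Fin n → Bool) ⊕ Fin n := Sum.inl (fun _ => true)


open SimpleGraph

variable {n : ℕ}

lemma exists_walk_len : ∀ (k : ℕ) (a b : Fin n → Bool), hammingDist a b = k →
    ∃ p : (extHypercube n).Walk (Sum.inl a) (Sum.inl b), p.length = k := by
  intro k
  induction k with
  | zero =>
    intro a b h
    obtain rfl := eq_of_hammingDist_eq_zero h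
    exact ⟨SimpleGraph.Walk.nil, rfl⟩
  | succ k ih =>
    intro a b h
    have hpos : 0 < hammingDist a b := by omega
    rw [hammingDist] at hpos
    obtain ⟨j, hj⟩ := Finset.card_pos.mp hpos
    rw [Finset.mem_filter] at hj
    have hj' : a j ≠ b j := hj.2
    set a' := Function.update a j (b j) with ha'
    have h1 : hammingDist a a' = 1 := by
      rw [hammingDist]
      have : ({i | a i ≠ a' i} : Finset (Fin n)) = {j} := by
        ext t
        simp only [Finset.mem_filter, Finset.mem_univ, true_and, Finset.mem_singleton, ha']
        by_cases ht : t = j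
        · subst ht; simp [hj']
        · simp [Function.update_of_ne ht, ht]
      rw [this, Finset.card_singleton]
    have h2 : hammingDist a' b = k := by
      rw [hammingDist]
      have : ({i | a' i ≠ b i} : Finset (Fin n)) = ({i | a i ≠ b i} : Finset (Fin n)).erase j := by
        ext t
        simp only [Finset.mem_filter, Finset.mem_univ, true_and, Finset.mem_erase, ha']
        by_cases ht : t = j
        · subst ht; simp
        · simp [Function.update_of_ne ht, ht]
      rw [this, Finset.card_erase_of_mem (by simp [hj']), hammingDist] at *
      omega
    obtain ⟨p, hp⟩ := ih a' b h2
    exact ⟨SimpleGraph.Walk.cons (show (extHypercube n).Adj (Sum.inl a) (Sum.inl a') from h1) p,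
      by simp [hp]⟩

def eproj (n : ℕ) : (Fin n → Bool) ⊕ Fin n → (Fin n → Bool)
  | Sum.inl a => a
  | Sum.inr i => unitVec n i

lemma adj_proj {u v : (Fin n → Bool) ⊕ Fin n} (h : (extHypercube n).Adj u v) :
    hammingDist (eproj n u) (eproj n v) ≤ 1 := by
  match u, v with
  | Sum.inl a, Sum.inl b => exact le_of_eq h
  | Sum.inl a, Sum.inr i => simp [eproj, show a = unitVec n i from h]
  | Sum.inr i, Sum.inl a => simp [eproj, show a = unitVec n i from h, hammingDist_comm]
  | Sum.inr i, Sum.inr j => exact absurd h id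

lemma hd_le_length {u v : (Fin n → Bool) ⊕ Fin n} (p : (extHypercube n).Walk u v) :
    hammingDist (eproj n u) (eproj n v) ≤ p.length := by
  induction p with
  | nil => simp
  | cons h p ih =>
    calc hammingDist (eproj n _) (eproj n _) ≤ _ + _ := hammingDist_triangle _ (eproj n _) _
    _ ≤ 1 + p.length := Nat.add_le_add (adj_proj h) ih
    _ = _ := by simp [SimpleGraph.Walk.length_cons]; omega

lemma reach_proj (u : (Fin n → Bool) ⊕ Fin n) :
    (extHypercube n).Reachable u (Sum.inl (eproj n u)) := by
  match u with
  | Sum.inl a => exact Reachable.refl _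
  | Sum.inr i => exact (SimpleGraph.Adj.reachable (show (extHypercube n).Adj _ _ from rfl))

lemma ext_connected : (extHypercube n).Connected := by
  rw [SimpleGraph.connected_iff]
  refine ⟨fun u v => ?_, ⟨Sum.inl (fun _ => true)⟩⟩
  obtain ⟨p, _⟩ := exists_walk_len (hammingDist (eproj n u) (eproj n v)) (eproj n u) (eproj n v) rfl
  exact (reach_proj u).trans (p.reachable.trans (reach_proj v).symm)

lemma dist_inl_inl (a b : Fin n → Bool) :
    (extHypercube n).dist (Sum.inl a) (Sum.inl b) = hammingDist a b := by
  obtain ⟨p, hp⟩ := exists_walk_len (hammingDist a b) a b rfl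
  refine le_antisymm (hp ▸ SimpleGraph.dist_le p) ?_
  obtain ⟨q, hq⟩ := (ext_connected (Sum.inl a) (Sum.inl b)).exists_walk_length_eq_dist
  calc hammingDist a b = hammingDist (eproj n (Sum.inl a)) (eproj n (Sum.inl b)) := rfl
  _ ≤ q.length := hd_le_length q
  _ = _ := hq

lemma dist_inr_left {i : Fin n} {v : (Fin n → Bool) ⊕ Fin n} (hv : v ≠ Sum.inr i) :
    (extHypercube n).dist (Sum.inr i) v = 1 + (extHypercube n).dist (Sum.inl (unitVec n i)) v := by
  have hadj : (extHypercube n).Adj (Sum.inr i) (Sum.inl (unitVec n i)) := rfl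
  have hle : (extHypercube n).dist (Sum.inr i) v ≤
      1 + (extHypercube n).dist (Sum.inl (unitVec n i)) v := by
    calc (extHypercube n).dist (Sum.inr i) v
        ≤ (extHypercube n).dist (Sum.inr i) (Sum.inl (unitVec n i)) +
          (extHypercube n).dist (Sum.inl (unitVec n i)) v := ext_connected.dist_triangle
    _ ≤ 1 + _ := by
        have := (SimpleGraph.dist_eq_one_iff_adj (G := extHypercube n)).mpr hadj
        omega
  refine le_antisymm hle ?_
  obtain ⟨q, hq⟩ := (ext_connected (Sum.inr i) v).exists_walk_length_eq_dist
  cases q with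
  | nil => exact absurd rfl (Ne.symm hv)
  | @cons _ x _ h p =>
    have hx : x = Sum.inl (unitVec n i) := by
      match x, h with
      | Sum.inl a, h => exact congrArg Sum.inl (show a = unitVec n i from h)
    subst hx
    have := SimpleGraph.dist_le p
    rw [SimpleGraph.Walk.length_cons] at hq
    omega

def maj3 (x y z : Bool) : Bool := (x && y) || (y && z) || (x && z)

lemma bool_coord (x y z : Bool) :
    ((if x ≠ z then (1:ℕ) else 0) = (if x ≠ y then 1 else 0) + (if y ≠ z then 1 else 0)) ↔
      (x = z → y = x) := by
  cases x <;> cases y <;> cases z <;> simp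

lemma hd_between (a m b : Fin n → Bool) :
    hammingDist a m + hammingDist m b = hammingDist a b ↔ ∀ j, a j = b j → m j = a j := by
  have key : ∀ x y : Fin n → Bool, hammingDist x y = ∑ j, if x j ≠ y j then 1 else 0 := by
    intro x y; rw [hammingDist, Finset.card_filter]
  rw [key, key, key, ← Finset.sum_add_distrib, eq_comm]
  rw [Finset.sum_eq_sum_iff_of_le (by
    intro j _
    cases hA : a j <;> cases hM : m j <;> cases hB : b j <;> simp [hA, hM, hB])]
  constructor
  · intro H j
    exact (bool_coord (a j) (m j) (b j)).mp (H j (Finset.mem_univ j))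
  · intro H j _
    exact (bool_coord (a j) (m j) (b j)).mpr (H j)

lemma not_between_inr {i : Fin n} {u v : (Fin n → Bool) ⊕ Fin n}
    (hu : u ≠ Sum.inr i) (hv : v ≠ Sum.inr i) :
    (extHypercube n).dist u (Sum.inr i) + (extHypercube n).dist (Sum.inr i) v ≠
      (extHypercube n).dist u v := by
  have hc : (extHypercube n).dist u (Sum.inr i) = (extHypercube n).dist (Sum.inr i) u :=
    SimpleGraph.dist_comm
  rw [hc, dist_inr_left hu, dist_inr_left hv]
  have h1 := ext_connected.dist_triangle (u := u) (v := Sum.inl (unitVec n i)) (w := v)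
  have h2 : (extHypercube n).dist (Sum.inl (unitVec n i)) u =
      (extHypercube n).dist u (Sum.inl (unitVec n i)) := SimpleGraph.dist_comm
  omega

lemma median_inl_iff (a b c : Fin n → Bool) (m : (Fin n → Bool) ⊕ Fin n) :
    IsMedianVtx (extHypercube n) (Sum.inl a) (Sum.inl b) (Sum.inl c) m ↔
      m = Sum.inl (fun j => maj3 (a j) (b j) (c j)) := by
  match m with
  | Sum.inr i =>
    constructor
    · rintro ⟨h1, -, -⟩
      exact absurd h1 (not_between_inr Sum.inl_ne_inr Sum.inl_ne_inr)
    · intro h; simp at h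
  | Sum.inl x =>
    unfold IsMedianVtx
    simp only [dist_inl_inl]
    rw [hd_between, hd_between, hd_between, Sum.inl.injEq]
    constructor
    · rintro ⟨h1, h2, h3⟩
      funext j
      have e1 := h1 j; have e2 := h2 j; have e3 := h3 j
      revert e1 e2 e3
      cases a j <;> cases b j <;> cases c j <;> cases x j <;> simp [maj3]
    · rintro rfl
      refine ⟨fun j h => ?_, fun j h => ?_, fun j h => ?_⟩ <;>
        · cases ha : a j <;> cases hb : b j <;> cases hc : c j <;> simp_all [maj3]

lemma btw_comm {V : Type*} {G : SimpleGraph V} {m x y : V} :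
    G.dist x m + G.dist m y = G.dist x y ↔ G.dist y m + G.dist m x = G.dist y x := by
  rw [SimpleGraph.dist_comm (u := y) (v := m), SimpleGraph.dist_comm (u := m) (v := x),
    SimpleGraph.dist_comm (u := y) (v := x)]
  omega

lemma med_perm12 {V : Type*} {G : SimpleGraph V} {u v w m : V} :
    IsMedianVtx G u v w m ↔ IsMedianVtx G v u w m := by
  unfold IsMedianVtx
  rw [btw_comm (x := u) (y := v)]
  tauto

lemma med_perm23 {V : Type*} {G : SimpleGraph V} {u v w m : V} :
    IsMedianVtx G u v w m ↔ IsMedianVtx G u w v m := by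
  unfold IsMedianVtx
  rw [btw_comm (x := v) (y := w)]
  tauto

lemma med_perm13 {V : Type*} {G : SimpleGraph V} {u v w m : V} :
    IsMedianVtx G u v w m ↔ IsMedianVtx G w v u m :=
  med_perm12.trans (med_perm23.trans med_perm12)

lemma med_leaf_iff {i : Fin n} {u v m : (Fin n → Bool) ⊕ Fin n}
    (hu : u ≠ Sum.inr i) (hv : v ≠ Sum.inr i) :
    IsMedianVtx (extHypercube n) (Sum.inr i) u v m ↔
      IsMedianVtx (extHypercube n) (Sum.inl (unitVec n i)) u v m := by
  by_cases hm : m = Sum.inr i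
  · subst hm
    constructor
    · rintro ⟨-, h2, -⟩
      have h2' : (extHypercube n).dist u (Sum.inr i) + (extHypercube n).dist (Sum.inr i) v =
          (extHypercube n).dist u v := by
        have : (extHypercube n).dist u (Sum.inr i) = (extHypercube n).dist (Sum.inr i) u :=
          SimpleGraph.dist_comm
        omega
      exact absurd h2' (not_between_inr hu hv)
    · rintro ⟨h1, -, -⟩
      exact absurd h1 (not_between_inr Sum.inl_ne_inr hu)
  · unfold IsMedianVtx
    rw [dist_inr_left hm, dist_inr_left hu, dist_inr_left hv]
    omega

lemma eu_rep1 (u w : (Fin n → Bool) ⊕ Fin n) :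
    ∃! m, IsMedianVtx (extHypercube n) u u w m := by
  refine ⟨u, ⟨by simp, by simp, by simp⟩, fun m hm => ?_⟩
  obtain ⟨h1, -, -⟩ := hm
  have hmu : (extHypercube n).dist m u = (extHypercube n).dist u m := SimpleGraph.dist_comm
  rw [SimpleGraph.dist_self] at h1
  exact ((ext_connected.dist_eq_zero_iff).mp (by omega : (extHypercube n).dist m u = 0))

lemma eu_rep13 (u v : (Fin n → Bool) ⊕ Fin n) :
    ∃! m, IsMedianVtx (extHypercube n) u v u m := by
  refine ⟨u, ⟨by simp, by simp [SimpleGraph.dist_comm], by simp⟩, fun m hm => ?_⟩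
  obtain ⟨-, -, h3⟩ := hm
  have hmu : (extHypercube n).dist m u = (extHypercube n).dist u m := SimpleGraph.dist_comm
  rw [SimpleGraph.dist_self] at h3
  exact ((ext_connected.dist_eq_zero_iff).mp (by omega : (extHypercube n).dist m u = 0))

lemma eu_rep23 (u v : (Fin n → Bool) ⊕ Fin n) :
    ∃! m, IsMedianVtx (extHypercube n) u v v m := by
  refine ⟨v, ⟨by simp, by simp, by simp [SimpleGraph.dist_comm]⟩, fun m hm => ?_⟩
  obtain ⟨-, h2, -⟩ := hm
  have hmv : (extHypercube n).dist m v = (extHypercube n).dist v m := SimpleGraph.dist_comm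
  rw [SimpleGraph.dist_self] at h2
  exact ((ext_connected.dist_eq_zero_iff).mp (by omega : (extHypercube n).dist m v = 0))

lemma eu_inl3 (a b c : Fin n → Bool) :
    ∃! m, IsMedianVtx (extHypercube n) (Sum.inl a) (Sum.inl b) (Sum.inl c) m :=
  ⟨Sum.inl (fun j => maj3 (a j) (b j) (c j)), (median_inl_iff a b c _).mpr rfl,
    fun m hm => (median_inl_iff a b c m).mp hm⟩

lemma eu_inl2 (a b : Fin n → Bool) (w : (Fin n → Bool) ⊕ Fin n) :
    ∃! m, IsMedianVtx (extHypercube n) (Sum.inl a) (Sum.inl b) w m := by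
  match w with
  | Sum.inl c => exact eu_inl3 a b c
  | Sum.inr k =>
    have key : ∀ m, IsMedianVtx (extHypercube n) (Sum.inl a) (Sum.inl b) (Sum.inr k) m ↔
        IsMedianVtx (extHypercube n) (Sum.inl a) (Sum.inl b) (Sum.inl (unitVec n k)) m := by
      intro m
      rw [med_perm13, med_leaf_iff Sum.inl_ne_inr Sum.inl_ne_inr, med_perm13]
    exact (existsUnique_congr key).mpr (eu_inl3 a b (unitVec n k))

lemma eu_inl1 (a : Fin n → Bool) (v w : (Fin n → Bool) ⊕ Fin n) :
    ∃! m, IsMedianVtx (extHypercube n) (Sum.inl a) v w m := by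
  match v with
  | Sum.inl b => exact eu_inl2 a b w
  | Sum.inr j =>
    by_cases hw : w = Sum.inr j
    · subst hw; exact eu_rep23 _ _
    · have key : ∀ m, IsMedianVtx (extHypercube n) (Sum.inl a) (Sum.inr j) w m ↔
          IsMedianVtx (extHypercube n) (Sum.inl a) (Sum.inl (unitVec n j)) w m := by
        intro m
        rw [med_perm12, med_leaf_iff Sum.inl_ne_inr hw, med_perm12]
      exact (existsUnique_congr key).mpr (eu_inl2 a (unitVec n j) w)

lemma eu_all (u v w : (Fin n → Bool) ⊕ Fin n) :
    ∃! m, IsMedianVtx (extHypercube n) u v w m := by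
  match u with
  | Sum.inl a => exact eu_inl1 a v w
  | Sum.inr i =>
    by_cases hv : v = Sum.inr i
    · subst hv; exact eu_rep1 _ _
    · by_cases hw : w = Sum.inr i
      · subst hw; exact eu_rep13 _ _
      · exact (existsUnique_congr fun m => med_leaf_iff hv hw).mpr
          (eu_inl1 (unitVec n i) v w)

lemma maj3_true (x y : Bool) : maj3 true x y = (x || y) := by cases x <;> cases y <;> rfl

lemma median_root_leaves {i j : Fin n} (hij : i ≠ j) (m : (Fin n → Bool) ⊕ Fin n)
    (hm : IsMedianVtx (extHypercube n) (Sum.inl (fun _ => true)) (Sum.inr i) (Sum.inr j) m) :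
    m = Sum.inl (fun t => unitVec n i t || unitVec n j t) := by
  rw [med_perm12] at hm
  rw [med_leaf_iff Sum.inl_ne_inr (by simpa using hij.symm)] at hm
  rw [med_perm12, med_perm13] at hm
  rw [med_leaf_iff Sum.inl_ne_inr Sum.inl_ne_inr] at hm
  rw [med_perm13] at hm
  have h := (median_inl_iff _ _ _ m).mp hm
  rw [h]
  congr 1
  funext t
  exact maj3_true _ _

/-- For every `n ≥ 2` the extended hypercube `Q^ext_n` is a median graph,
and the medians `med(ρ, x_i, x_j)` and `med(ρ, x_k, x_l)` are distinct whenever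
`i ≠ j`, `k ≠ l` and `{i,j} ≠ {k,l}`. -/
theorem stmt_3 (n : ℕ) (hn : 2 ≤ n) :
    IsMedianGraph (extHypercube n) ∧
    ∀ i j k l : Fin n, i ≠ j → k ≠ l →
      ({i, j} : Finset (Fin n)) ≠ ({k, l} : Finset (Fin n)) →
      ∀ m m' : (Fin n → Bool) ⊕ Fin n,
        IsMedianVtx (extHypercube n) (qRoot n) (Sum.inr i) (Sum.inr j) m →
        IsMedianVtx (extHypercube n) (qRoot n) (Sum.inr k) (Sum.inr l) m' →
        m ≠ m' := by
  refine ⟨⟨ext_connected, eu_all⟩, ?_⟩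
  intro i j k l hij hkl hne m m' hm hm' hmm'
  rw [median_root_leaves hij m hm, median_root_leaves hkl m' hm'] at hmm'
  have hfg := Sum.inl.inj hmm'
  apply hne
  ext t
  have ht := congrFun hfg t
  simp only [Finset.mem_insert, Finset.mem_singleton]
  unfold unitVec at ht
  by_cases h1 : t = i <;> by_cases h2 : t = j <;> by_cases h3 : t = k <;> by_cases h4 : t = l <;>
    simp [h1, h2, h3, h4] at ht ⊢ <;> tauto
end

section
/- For every n ≥ 2, the half-grid H_n is a median graph. -/
/-- Adjacency of the infinite grid on `ℕ × ℕ`: two pairs are adjacent iff they agree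
in one coordinate and differ by exactly one in the other (this is the adjacency of a
Cartesian product of paths). -/
def gridAdj (p q : ℕ × ℕ) : Prop :=
  (p.1 = q.1 ∧ (p.2 + 1 = q.2 ∨ q.2 + 1 = p.2)) ∨
  (p.2 = q.2 ∧ (p.1 + 1 = q.1 ∨ q.1 + 1 = p.1))

/-- The grid graph on `ℕ × ℕ`. -/
def gridGraph : SimpleGraph (ℕ × ℕ) where
  Adj := gridAdj
  symm := by
    constructor
    intro p q h
    simp only [gridAdj] at h ⊢
    omega
  loopless := by
    constructor
    intro p h
    simp only [gridAdj] at h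
    omega

/-- The vertex set `{1, …, n} × {1, …, n}` of `P_n □ P_n` (1-indexed). -/
def gridVert (n : ℕ) : Set (ℕ × ℕ) := {p | 1 ≤ p.1 ∧ p.1 ≤ n ∧ 1 ≤ p.2 ∧ p.2 ≤ n}

/-- The vertex set of the half-grid `H_n`: the vertices `(i,j)` of `P_n □ P_n` with
either `i = 1` and `1 ≤ j ≤ n`, or `2 ≤ i ≤ n` and `i - 1 ≤ j ≤ n`; equivalently,
the vertices with `i ≤ j + 1`. -/
def halfVert (n : ℕ) : Set (ℕ × ℕ) := {p | p ∈ gridVert n ∧ p.1 ≤ p.2 + 1}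

/-- The full grid `P_n □ P_n` (1-indexed), as an induced subgraph of `gridGraph`. -/
def fullGrid (n : ℕ) : SimpleGraph (gridVert n) := gridGraph.induce (gridVert n)

/-- The half-grid `H_n`, the subgraph of `P_n □ P_n` induced by `halfVert n`. -/
def halfGrid (n : ℕ) : SimpleGraph (halfVert n) := gridGraph.induce (halfVert n)

/-- The ℓ¹ distance on `ℕ × ℕ`. -/
def L1d (p q : ℕ × ℕ) : ℕ := (p.1 - q.1) + (q.1 - p.1) + ((p.2 - q.2) + (q.2 - p.2))

lemma halfGrid_adj {n : ℕ} {a b : halfVert n} :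
    (halfGrid n).Adj a b ↔ gridAdj a.1 b.1 := Iff.rfl

lemma mem_halfVert {n : ℕ} {p : ℕ × ℕ} :
    p ∈ halfVert n ↔ 1 ≤ p.1 ∧ p.1 ≤ n ∧ 1 ≤ p.2 ∧ p.2 ≤ n ∧ p.1 ≤ p.2 + 1 := by
  simp only [halfVert, gridVert, Set.mem_setOf_eq]; tauto

/-- Every walk in the half-grid is at least as long as the ℓ¹ distance. -/
lemma length_ge {n : ℕ} {a b : halfVert n} (w : (halfGrid n).Walk a b) :
    L1d a.1 b.1 ≤ w.length := by
  induction w with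
  | nil => simp [L1d]
  | cons h w ih =>
    rw [SimpleGraph.Walk.length_cons]
    rw [halfGrid_adj] at h
    simp only [gridAdj] at h
    simp only [L1d] at *
    omega

/-- There is a walk in the half-grid realizing the ℓ¹ distance. -/
lemma exists_walk {n : ℕ} : ∀ (k : ℕ) (a b : halfVert n), L1d a.1 b.1 = k →
    ∃ w : (halfGrid n).Walk a b, w.length = k := by
  intro k
  induction k with
  | zero =>
    rintro ⟨⟨x, y⟩, hxy⟩ ⟨⟨c, d⟩, hcd⟩ h
    simp only [L1d] at h
    have hx : x = c := by omega
    have hy : y = d := by omega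
    subst hx; subst hy
    exact ⟨SimpleGraph.Walk.nil, rfl⟩
  | succ k ih =>
    rintro ⟨⟨x, y⟩, hxy⟩ ⟨⟨c, d⟩, hcd⟩ h
    simp only [L1d] at h
    rw [mem_halfVert] at hxy hcd
    have hxy' : (x, y) ∈ halfVert n := mem_halfVert.mpr hxy
    have hcd' : (c, d) ∈ halfVert n := mem_halfVert.mpr hcd
    have : ∃ p : ℕ × ℕ, ∃ hp : p ∈ halfVert n,
        (halfGrid n).Adj ⟨(x, y), hxy'⟩ ⟨p, hp⟩ ∧ L1d p (c, d) = k := by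
      simp only at hxy hcd
      by_cases h1 : c < x
      · refine ⟨(x - 1, y), mem_halfVert.mpr (by omega), ?_, ?_⟩
        · exact Or.inr ⟨rfl, Or.inr (show x - 1 + 1 = x by omega)⟩
        · simp only [L1d]; omega
      · by_cases h2 : y < d
        · refine ⟨(x, y + 1), mem_halfVert.mpr (by omega), ?_, ?_⟩
          · exact Or.inl ⟨rfl, Or.inl rfl⟩
          · simp only [L1d]; omega
        · by_cases h3 : x < c
          · refine ⟨(x + 1, y), mem_halfVert.mpr (by omega), ?_, ?_⟩
            · exact Or.inr ⟨rfl, Or.inl rfl⟩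
            · simp only [L1d]; omega
          · refine ⟨(x, y - 1), mem_halfVert.mpr (by omega), ?_, ?_⟩
            · exact Or.inl ⟨rfl, Or.inr (show y - 1 + 1 = y by omega)⟩
            · simp only [L1d]; omega
    obtain ⟨p, hp, hadj, hk⟩ := this
    obtain ⟨w, hw⟩ := ih ⟨p, hp⟩ ⟨(c, d), hcd'⟩ hk
    exact ⟨SimpleGraph.Walk.cons hadj w, by simp [hw]⟩

/-- The graph distance in the half-grid is the ℓ¹ distance. -/
lemma halfGrid_dist {n : ℕ} (a b : halfVert n) :
    (halfGrid n).dist a b = L1d a.1 b.1 := by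
  obtain ⟨w, hw⟩ := exists_walk (L1d a.1 b.1) a b rfl
  have h1 : (halfGrid n).dist a b ≤ L1d a.1 b.1 := hw ▸ SimpleGraph.dist_le w
  have hr : (halfGrid n).Reachable a b := ⟨w⟩
  obtain ⟨w', hw'⟩ := hr.exists_walk_length_eq_dist
  have h2 := length_ge w'
  omega

def medv (a b c : ℕ) : ℕ := min (max a b) (min (max b c) (max a c))

lemma med_betw (a b c : ℕ) :
    ((a - medv a b c) + (medv a b c - a)) + ((medv a b c - b) + (b - medv a b c)) = (a - b) + (b - a) ∧
    ((b - medv a b c) + (medv a b c - b)) + ((medv a b c - c) + (c - medv a b c)) = (b - c) + (c - b) ∧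
    ((a - medv a b c) + (medv a b c - a)) + ((medv a b c - c) + (c - medv a b c)) = (a - c) + (c - a) := by
  unfold medv
  refine ⟨?_, ?_, ?_⟩ <;> omega

lemma med_eq (a b c m : ℕ)
    (h1 : ((a - m) + (m - a)) + ((m - b) + (b - m)) = (a - b) + (b - a))
    (h2 : ((b - m) + (m - b)) + ((m - c) + (c - m)) = (b - c) + (c - b))
    (h3 : ((a - m) + (m - a)) + ((m - c) + (c - m)) = (a - c) + (c - a)) :
    m = medv a b c := by
  unfold medv
  omega

lemma med_mono (n a1 a2 b1 b2 c1 c2 : ℕ)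
    (ha : 1 ≤ a1 ∧ a1 ≤ n ∧ 1 ≤ a2 ∧ a2 ≤ n ∧ a1 ≤ a2 + 1)
    (hb : 1 ≤ b1 ∧ b1 ≤ n ∧ 1 ≤ b2 ∧ b2 ≤ n ∧ b1 ≤ b2 + 1)
    (hc : 1 ≤ c1 ∧ c1 ≤ n ∧ 1 ≤ c2 ∧ c2 ≤ n ∧ c1 ≤ c2 + 1) :
    1 ≤ medv a1 b1 c1 ∧ medv a1 b1 c1 ≤ n ∧ 1 ≤ medv a2 b2 c2 ∧ medv a2 b2 c2 ≤ n ∧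
      medv a1 b1 c1 ≤ medv a2 b2 c2 + 1 := by
  unfold medv
  omega

lemma L1_split (a1 a2 b1 b2 x y : ℕ)
    (h : L1d (a1, a2) (x, y) + L1d (x, y) (b1, b2) = L1d (a1, a2) (b1, b2)) :
    ((a1 - x) + (x - a1)) + ((x - b1) + (b1 - x)) = (a1 - b1) + (b1 - a1) ∧
    ((a2 - y) + (y - a2)) + ((y - b2) + (b2 - y)) = (a2 - b2) + (b2 - a2) := by
  simp only [L1d] at h
  constructor <;> omega

/-- For every `n ≥ 2`, the half-grid `H_n` is a median graph. -/
theorem stmt_5 (n : ℕ) (hn : 2 ≤ n) : IsMedianGraph (halfGrid n) := by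
  constructor
  · rw [SimpleGraph.connected_iff]
    refine ⟨fun a b => ?_, ⟨⟨(1, 1), mem_halfVert.mpr (by omega)⟩⟩⟩
    obtain ⟨w, _⟩ := exists_walk (L1d a.1 b.1) a b rfl
    exact ⟨w⟩
  · rintro ⟨⟨u1, u2⟩, hu⟩ ⟨⟨v1, v2⟩, hv⟩ ⟨⟨w1, w2⟩, hw⟩
    rw [mem_halfVert] at hu hv hw
    have hm : (medv u1 v1 w1, medv u2 v2 w2) ∈ halfVert n :=
      mem_halfVert.mpr (med_mono n u1 u2 v1 v2 w1 w2 hu hv hw)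
    refine ⟨⟨(medv u1 v1 w1, medv u2 v2 w2), hm⟩, ⟨?_, ?_, ?_⟩, ?_⟩
    · have h1 := (med_betw u1 v1 w1).1
      have h2 := (med_betw u2 v2 w2).1
      simp only [halfGrid_dist, L1d]
      omega
    · have h1 := (med_betw u1 v1 w1).2.1
      have h2 := (med_betw u2 v2 w2).2.1
      simp only [halfGrid_dist, L1d]
      omega
    · have h1 := (med_betw u1 v1 w1).2.2
      have h2 := (med_betw u2 v2 w2).2.2
      simp only [halfGrid_dist, L1d]
      omega
    · rintro ⟨⟨x, y⟩, hxy⟩ ⟨e1, e2, e3⟩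
      simp only [halfGrid_dist] at e1 e2 e3
      obtain ⟨e1x, e1y⟩ := L1_split u1 u2 v1 v2 x y e1
      obtain ⟨e2x, e2y⟩ := L1_split v1 v2 w1 w2 x y e2
      obtain ⟨e3x, e3y⟩ := L1_split u1 u2 w1 w2 x y e3
      apply Subtype.ext
      show (x, y) = (medv u1 v1 w1, medv u2 v2 w2)
      rw [Prod.mk.injEq]
      exact ⟨med_eq u1 v1 w1 x e1x e2x e3x, med_eq u2 v2 w2 y e1y e2y e3y⟩
end

section
/- Let n ≥ 2 and for 1 ≤ ℓ ≤ n+1 define vertices of the half-grid H_n by v_1 = (1,1), v_{n+1} = (n,n), and v_ℓ = (ℓ,ℓ−1) for 2 ≤ ℓ ≤ n. Then for all 1 ≤ i < j ≤ n+1, the distance between v_i and v_j in H_n equals their distance in P_n □ P_n, and there is a shortest path in H_n from v_i to v_j that contains the vertex (i, j−1). -/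
/-- The distinguished vertices `v_1 = (1,1)`, `v_{n+1} = (n,n)` and `v_ℓ = (ℓ, ℓ-1)`
for `2 ≤ ℓ ≤ n` of the half-grid `H_n`. -/
def hgVert (n ℓ : ℕ) : ℕ × ℕ :=
  if ℓ = n + 1 then (n, n) else if ℓ = 1 then (1, 1) else (ℓ, ℓ - 1)


def l1 (p q : ℕ × ℕ) : ℕ := ((p.1 - q.1) + (q.1 - p.1)) + ((p.2 - q.2) + (q.2 - p.2))

lemma gridAdj_l1 {p q : ℕ × ℕ} (h : gridAdj p q) : l1 p q = 1 := by
  simp only [gridAdj] at h; simp only [l1]; omega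

lemma l1_le_walk_length {S : Set (ℕ × ℕ)} {a b : S}
    (w : (gridGraph.induce S).Walk a b) : l1 a.1 b.1 ≤ w.length := by
  induction w with
  | nil => simp [l1]
  | @cons x y z h p ih =>
    have h1 : gridAdj x.1 y.1 := h
    have h2 := gridAdj_l1 h1
    simp only [SimpleGraph.Walk.length_cons]
    simp only [l1] at h2 ih ⊢
    omega

lemma dist_eq_l1 {S : Set (ℕ × ℕ)} {p q : S} (w : (gridGraph.induce S).Walk p q)
    (hl : w.length = l1 p.1 q.1) :
    (gridGraph.induce S).dist p q = l1 p.1 q.1 := by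
  refine le_antisymm (hl ▸ SimpleGraph.dist_le w) ?_
  obtain ⟨w', hw'⟩ := SimpleGraph.Reachable.exists_walk_length_eq_dist ⟨w⟩
  exact hw' ▸ l1_le_walk_length w'

lemma vert_walk {S : Set (ℕ × ℕ)} (x b : ℕ) (k : ℕ)
    (h : ∀ t, b ≤ t → t ≤ b + k → (x, t) ∈ S)
    (p q : S) (hp : p.1 = (x, b)) (hq : q.1 = (x, b + k)) :
    ∃ w : (gridGraph.induce S).Walk p q, w.length = k := by
  induction k generalizing q with
  | zero =>
    cases Subtype.ext (hp.trans hq.symm)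
    exact ⟨SimpleGraph.Walk.nil, rfl⟩
  | succ k ih =>
    obtain ⟨w, hw⟩ := ih (fun t ht1 ht2 => h t ht1 (by omega))
      ⟨(x, b + k), h _ (by omega) (by omega)⟩ rfl
    have hadj : (gridGraph.induce S).Adj ⟨(x, b + k), h _ (by omega) (by omega)⟩ q := by
      show gridGraph.Adj _ q.1
      rw [hq]
      exact Or.inl ⟨rfl, Or.inl rfl⟩
    exact ⟨w.concat hadj, by simp [hw]⟩

lemma horiz_walk {S : Set (ℕ × ℕ)} (y b : ℕ) (k : ℕ)
    (h : ∀ t, b ≤ t → t ≤ b + k → (t, y) ∈ S)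
    (p q : S) (hp : p.1 = (b, y)) (hq : q.1 = (b + k, y)) :
    ∃ w : (gridGraph.induce S).Walk p q, w.length = k := by
  induction k generalizing q with
  | zero =>
    cases Subtype.ext (hp.trans hq.symm)
    exact ⟨SimpleGraph.Walk.nil, rfl⟩
  | succ k ih =>
    obtain ⟨w, hw⟩ := ih (fun t ht1 ht2 => h t ht1 (by omega))
      ⟨(b + k, y), h _ (by omega) (by omega)⟩ rfl
    have hadj : (gridGraph.induce S).Adj ⟨(b + k, y), h _ (by omega) (by omega)⟩ q := by
      show gridGraph.Adj _ q.1
      rw [hq]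
      exact Or.inr ⟨rfl, Or.inl rfl⟩
    exact ⟨w.concat hadj, by simp [hw]⟩

lemma Ldist {S : Set (ℕ × ℕ)} {x1 y1 x2 y2 : ℕ} (hx : x1 ≤ x2) (hy : y1 ≤ y2)
    (hmem : ∀ a b : ℕ, (a = x1 ∧ y1 ≤ b ∧ b ≤ y2) ∨ (b = y2 ∧ x1 ≤ a ∧ a ≤ x2) → (a, b) ∈ S)
    (h1 : (x1, y1) ∈ S) (h2 : (x1, y2) ∈ S) (h3 : (x2, y2) ∈ S) :
    (gridGraph.induce S).dist ⟨(x1, y1), h1⟩ ⟨(x1, y2), h2⟩ = y2 - y1 ∧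
    (gridGraph.induce S).dist ⟨(x1, y2), h2⟩ ⟨(x2, y2), h3⟩ = x2 - x1 ∧
    (gridGraph.induce S).dist ⟨(x1, y1), h1⟩ ⟨(x2, y2), h3⟩ = (x2 - x1) + (y2 - y1) := by
  obtain ⟨W1, hW1⟩ := vert_walk x1 y1 (y2 - y1)
    (fun t ht1 ht2 => hmem x1 t (Or.inl ⟨rfl, ht1, by omega⟩))
    ⟨(x1, y1), h1⟩ ⟨(x1, y2), h2⟩ rfl (by simp; omega)
  obtain ⟨W2, hW2⟩ := horiz_walk y2 x1 (x2 - x1)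
    (fun t ht1 ht2 => hmem t y2 (Or.inr ⟨rfl, ht1, by omega⟩))
    ⟨(x1, y2), h2⟩ ⟨(x2, y2), h3⟩ rfl (by simp; omega)
  have e1 : l1 (x1, y1) (x1, y2) = y2 - y1 := by simp [l1]; omega
  have e2 : l1 (x1, y2) (x2, y2) = x2 - x1 := by simp [l1]; omega
  have e3 : l1 (x1, y1) (x2, y2) = (x2 - x1) + (y2 - y1) := by simp [l1]; omega
  refine ⟨?_, ?_, ?_⟩
  · rw [← e1]; exact dist_eq_l1 W1 (by rw [hW1, e1])
  · rw [← e2]; exact dist_eq_l1 W2 (by rw [hW2, e2])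
  · rw [← e3]
    exact dist_eq_l1 (W1.append W2) (by simp [hW1, hW2, e3]; omega)

/-- For `n ≥ 2` and `1 ≤ i < j ≤ n+1`, the distance between `v_i` and
`v_j` in `H_n` equals their distance in `P_n □ P_n`, and the vertex `(i, j-1)` lies on
a shortest path in `H_n` from `v_i` to `v_j` (expressed by the additivity of
distances through `(i, j-1)`). -/
theorem stmt_6 (n i j : ℕ) (hn : 2 ≤ n) (h1 : 1 ≤ i) (hij : i < j) (hj : j ≤ n + 1)
    (hih : hgVert n i ∈ halfVert n) (hjh : hgVert n j ∈ halfVert n)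
    (hig : hgVert n i ∈ gridVert n) (hjg : hgVert n j ∈ gridVert n)
    (hw : ((i, j - 1) : ℕ × ℕ) ∈ halfVert n) :
    (halfGrid n).dist ⟨hgVert n i, hih⟩ ⟨hgVert n j, hjh⟩ =
      (fullGrid n).dist ⟨hgVert n i, hig⟩ ⟨hgVert n j, hjg⟩ ∧
    (halfGrid n).dist ⟨hgVert n i, hih⟩ ⟨(i, j - 1), hw⟩ +
      (halfGrid n).dist ⟨(i, j - 1), hw⟩ ⟨hgVert n j, hjh⟩ =
      (halfGrid n).dist ⟨hgVert n i, hih⟩ ⟨hgVert n j, hjh⟩ := by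
  have hiA : ∃ a2, hgVert n i = (i, a2) ∧ 1 ≤ a2 ∧ a2 ≤ i ∧ i ≤ a2 + 1 := by
    unfold hgVert
    split_ifs with hc1 hc2
    · exact absurd hc1 (by omega)
    · exact ⟨1, by rw [hc2], le_rfl, by omega, by omega⟩
    · exact ⟨i - 1, rfl, by omega, by omega, by omega⟩
  have hjB : ∃ b1, hgVert n j = (b1, j - 1) ∧ i ≤ b1 ∧ b1 ≤ n ∧ b1 ≤ j ∧ j ≤ b1 + 1 := by
    unfold hgVert
    split_ifs with hc1 hc2
    · exact ⟨n, by simp only [Prod.mk.injEq]; exact ⟨trivial, by omega⟩, by omega, le_rfl, by omega, by omega⟩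
    · exact absurd hc2 (by omega)
    · exact ⟨j, rfl, by omega, by omega, le_rfl, by omega⟩
  obtain ⟨a2, hA, ha1, ha2, ha3⟩ := hiA
  obtain ⟨b1, hB, hb1, hb2, hb3, hb4⟩ := hjB
  have eA : (⟨hgVert n i, hih⟩ : ↑(halfVert n)) = ⟨(i, a2), hA ▸ hih⟩ := Subtype.ext hA
  have eB : (⟨hgVert n j, hjh⟩ : ↑(halfVert n)) = ⟨(b1, j - 1), hB ▸ hjh⟩ := Subtype.ext hB
  have eA' : (⟨hgVert n i, hig⟩ : ↑(gridVert n)) = ⟨(i, a2), hA ▸ hig⟩ := Subtype.ext hA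
  have eB' : (⟨hgVert n j, hjg⟩ : ↑(gridVert n)) = ⟨(b1, j - 1), hB ▸ hjg⟩ := Subtype.ext hB
  simp only [halfGrid, fullGrid]
  rw [eA, eB, eA', eB']
  have Lh := Ldist (S := halfVert n) (x1 := i) (y1 := a2) (x2 := b1) (y2 := j - 1)
    hb1 (by omega)
    (fun a b hab => by simp [halfVert, gridVert]; omega)
    (hA ▸ hih) hw (hB ▸ hjh)
  have Lg := Ldist (S := gridVert n) (x1 := i) (y1 := a2) (x2 := b1) (y2 := j - 1)
    hb1 (by omega)
    (fun a b hab => by simp [gridVert]; omega)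
    (hA ▸ hig) (by simp [gridVert]; omega) (hB ▸ hjg)
  exact ⟨Lh.2.2.trans Lg.2.2.symm, by rw [Lh.1, Lh.2.1, Lh.2.2]; omega⟩
end

section
/- Let n ≥ 2, let ρ = (1,n) in the half-grid H_n, and for 1 ≤ ℓ ≤ n+1 define v_1 = (1,1), v_{n+1} = (n,n), and v_ℓ = (ℓ,ℓ−1) for 2 ≤ ℓ ≤ n. Then for all 1 ≤ i < j ≤ n+1 there is a shortest path in H_n from ρ to v_i containing the vertex (i,j−1), and a shortest path in H_n from ρ to v_j containing (i,j−1); moreover the distances from ρ to v_i and to v_j in H_n equal the corresponding distances in P_n □ P_n. -/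
def ldist (p q : ℕ × ℕ) : ℕ := ((p.1 - q.1) + (q.1 - p.1)) + ((p.2 - q.2) + (q.2 - p.2))

lemma ldist_walk_le {S : Set (ℕ × ℕ)} {p q : S}
    (w : (gridGraph.induce S).Walk p q) : ldist p q ≤ w.length := by
  induction w with
  | nil => simp [ldist]
  | @cons u v r h w ih =>
    have h' : gridAdj (↑u) (↑v) := h
    simp only [gridAdj] at h'
    simp only [SimpleGraph.Walk.length_cons]
    simp only [ldist] at *
    omega

lemma exists_walk_ldist {S : Set (ℕ × ℕ)}
    (hS : ∀ p q : ℕ × ℕ, p ∈ S → q ∈ S → p ≠ q →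
      ∃ p', p' ∈ S ∧ gridAdj p p' ∧ ldist p' q + 1 = ldist p q) :
    ∀ (N : ℕ) (p q : S), ldist p q = N →
      ∃ w : (gridGraph.induce S).Walk p q, w.length = N := by
  intro N
  induction N with
  | zero =>
    intro p q h
    have : (p : ℕ × ℕ) = q := by
      simp only [ldist] at h
      exact Prod.ext (by omega) (by omega)
    have hpq : p = q := Subtype.ext this
    subst hpq
    exact ⟨SimpleGraph.Walk.nil, rfl⟩
  | succ n ih =>
    intro p q h
    have hne : (p : ℕ × ℕ) ≠ q := by
      intro he
      rw [he] at h
      simp [ldist] at h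
    obtain ⟨p', hp'S, hadj, hl⟩ := hS p q p.2 q.2 hne
    obtain ⟨w, hw⟩ := ih ⟨p', hp'S⟩ q (show ldist p' ↑q = n by omega)
    have hadj' : (gridGraph.induce S).Adj p ⟨p', hp'S⟩ := hadj
    exact ⟨SimpleGraph.Walk.cons hadj' w, by simp [hw]⟩

lemma dist_eq_ldist {S : Set (ℕ × ℕ)}
    (hS : ∀ p q : ℕ × ℕ, p ∈ S → q ∈ S → p ≠ q →
      ∃ p', p' ∈ S ∧ gridAdj p p' ∧ ldist p' q + 1 = ldist p q)
    (p q : S) : (gridGraph.induce S).dist p q = ldist p q := by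
  obtain ⟨w, hw⟩ := exists_walk_ldist hS (ldist p q) p q rfl
  have h1 : (gridGraph.induce S).dist p q ≤ ldist p q := hw ▸ SimpleGraph.dist_le w
  have hr : (gridGraph.induce S).Reachable p q := ⟨w⟩
  obtain ⟨w', hw'⟩ := hr.exists_walk_length_eq_dist
  have h2 := ldist_walk_le w'
  omega

lemma halfVert_step (n : ℕ) : ∀ p q : ℕ × ℕ, p ∈ halfVert n → q ∈ halfVert n → p ≠ q →
    ∃ p', p' ∈ halfVert n ∧ gridAdj p p' ∧ ldist p' q + 1 = ldist p q := by
  rintro ⟨a, b⟩ ⟨c, d⟩ hp hq hne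
  simp only [halfVert, gridVert, Set.mem_setOf_eq] at hp hq
  have hne' : a ≠ c ∨ b ≠ d := by
    by_contra h; push_neg at h; exact hne (by simp [h.1, h.2])
  rcases lt_trichotomy a c with h | h | h
  · by_cases hb : a ≤ b
    · exact ⟨(a + 1, b), by simp [halfVert, gridVert]; omega, by simp [gridAdj],
        by simp [ldist]; omega⟩
    · exact ⟨(a, b + 1), by simp [halfVert, gridVert]; omega, by simp [gridAdj],
        by simp [ldist]; omega⟩
  · rcases lt_trichotomy b d with h2 | h2 | h2
    · exact ⟨(a, b + 1), by simp [halfVert, gridVert]; omega, by simp [gridAdj],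
        by simp [ldist]; omega⟩
    · omega
    · exact ⟨(a, b - 1), by simp [halfVert, gridVert]; omega, by simp [gridAdj]; omega,
        by simp [ldist]; omega⟩
  · exact ⟨(a - 1, b), by simp [halfVert, gridVert]; omega, by simp [gridAdj]; omega,
      by simp [ldist]; omega⟩

lemma gridVert_step (n : ℕ) : ∀ p q : ℕ × ℕ, p ∈ gridVert n → q ∈ gridVert n → p ≠ q →
    ∃ p', p' ∈ gridVert n ∧ gridAdj p p' ∧ ldist p' q + 1 = ldist p q := by
  rintro ⟨a, b⟩ ⟨c, d⟩ hp hq hne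
  simp only [gridVert, Set.mem_setOf_eq] at hp hq
  have hne' : a ≠ c ∨ b ≠ d := by
    by_contra h; push_neg at h; exact hne (by simp [h.1, h.2])
  rcases lt_trichotomy a c with h | h | h
  · exact ⟨(a + 1, b), by simp [gridVert]; omega, by simp [gridAdj], by simp [ldist]; omega⟩
  · rcases lt_trichotomy b d with h2 | h2 | h2
    · exact ⟨(a, b + 1), by simp [gridVert]; omega, by simp [gridAdj], by simp [ldist]; omega⟩
    · omega
    · exact ⟨(a, b - 1), by simp [gridVert]; omega, by simp [gridAdj]; omega,
        by simp [ldist]; omega⟩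
  · exact ⟨(a - 1, b), by simp [gridVert]; omega, by simp [gridAdj]; omega,
      by simp [ldist]; omega⟩

lemma halfGrid_dist_eq (n : ℕ) (p q : halfVert n) :
    (halfGrid n).dist p q = ldist p q := dist_eq_ldist (halfVert_step n) p q

lemma fullGrid_dist_eq (n : ℕ) (p q : gridVert n) :
    (fullGrid n).dist p q = ldist p q := dist_eq_ldist (gridVert_step n) p q


/-- For `n ≥ 2`, `ρ = (1,n)`, and `1 ≤ i < j ≤ n+1`, the vertex `(i, j-1)`
lies on a shortest path in `H_n` from `ρ` to `v_i` and also on a shortest path in `H_n`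
from `ρ` to `v_j` (expressed by additivity of distances through `(i, j-1)`); moreover
the distances in `H_n` from `ρ` to `v_i` and to `v_j` coincide with the corresponding
distances in `P_n □ P_n`. -/
theorem stmt_7 (n i j : ℕ) (hn : 2 ≤ n) (h1 : 1 ≤ i) (hij : i < j) (hj : j ≤ n + 1)
    (hρh : ((1, n) : ℕ × ℕ) ∈ halfVert n) (hρg : ((1, n) : ℕ × ℕ) ∈ gridVert n)
    (hih : hgVert n i ∈ halfVert n) (hjh : hgVert n j ∈ halfVert n)
    (hig : hgVert n i ∈ gridVert n) (hjg : hgVert n j ∈ gridVert n)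
    (hw : ((i, j - 1) : ℕ × ℕ) ∈ halfVert n) :
    ((halfGrid n).dist ⟨(1, n), hρh⟩ ⟨(i, j - 1), hw⟩ +
        (halfGrid n).dist ⟨(i, j - 1), hw⟩ ⟨hgVert n i, hih⟩ =
      (halfGrid n).dist ⟨(1, n), hρh⟩ ⟨hgVert n i, hih⟩) ∧
    ((halfGrid n).dist ⟨(1, n), hρh⟩ ⟨(i, j - 1), hw⟩ +
        (halfGrid n).dist ⟨(i, j - 1), hw⟩ ⟨hgVert n j, hjh⟩ =
      (halfGrid n).dist ⟨(1, n), hρh⟩ ⟨hgVert n j, hjh⟩) ∧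
    (halfGrid n).dist ⟨(1, n), hρh⟩ ⟨hgVert n i, hih⟩ =
      (fullGrid n).dist ⟨(1, n), hρg⟩ ⟨hgVert n i, hig⟩ ∧
    (halfGrid n).dist ⟨(1, n), hρh⟩ ⟨hgVert n j, hjh⟩ =
      (fullGrid n).dist ⟨(1, n), hρg⟩ ⟨hgVert n j, hjg⟩ := by
  rw [halfGrid_dist_eq, halfGrid_dist_eq, halfGrid_dist_eq, halfGrid_dist_eq,
    halfGrid_dist_eq, fullGrid_dist_eq, fullGrid_dist_eq]
  simp only [halfVert, gridVert, Set.mem_setOf_eq] at hw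
  simp only [hgVert, ldist]
  split_ifs <;> simp_all <;> omega
end

section
/- Let H^ext_{n+1} (n ≥ 2) be the extended half-grid with leaves x_1,…,x_{n+1} and root ρ = (1,n). Then H^ext_{n+1} is a median graph, and for all leaves x_i and x_j with i < j one has med(ρ, x_i, x_j) = (i, j−1). -/
/-- Indices `1 ≤ ℓ ≤ n+1` of the leaves `x_1, …, x_{n+1}` of the extended half-grid. -/
abbrev leafIdx (n : ℕ) : Type := {ℓ : ℕ // 1 ≤ ℓ ∧ ℓ ≤ n + 1}

/-- The extended half-grid `H^ext_{n+1}`: the half-grid `H_n` together with `n+1`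
leaves `x_1, …, x_{n+1}` (encoded as `Sum.inr ℓ`), where `x_1` is adjacent exactly to
`(1,1)`, `x_{n+1}` to `(n,n)`, and `x_ℓ` to `(ℓ, ℓ-1)` for `2 ≤ ℓ ≤ n`. -/
def extHalfGrid (n : ℕ) : SimpleGraph (↥(halfVert n) ⊕ leafIdx n) where
  Adj x y :=
    match x, y with
    | Sum.inl a, Sum.inl b => gridAdj a.val b.val
    | Sum.inl a, Sum.inr ℓ => a.val = hgVert n ℓ.val
    | Sum.inr ℓ, Sum.inl a => a.val = hgVert n ℓ.val
    | Sum.inr _, Sum.inr _ => False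
  symm := by
    constructor
    rintro (a | i) (b | j) h
    · show gridAdj b.val a.val
      have h' : gridAdj a.val b.val := h
      simp only [gridAdj] at h' ⊢
      omega
    · exact h
    · exact h
    · exact h
  loopless := by
    constructor
    rintro (a | i) h
    · have h' : gridAdj a.val a.val := h
      simp only [gridAdj] at h'
      omega
    · exact h

/-! ### Auxiliary development for `stmt_8` -/

section Stmt8Aux

open SimpleGraph

/-- The `L1` distance on `ℕ × ℕ`. -/
def ddL1 (a b : ℕ × ℕ) : ℕ :=
  (max a.1 b.1 - min a.1 b.1) + (max a.2 b.2 - min a.2 b.2)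

/-- Coordinatewise median of three naturals. -/
def med3 (x y z : ℕ) : ℕ := x + y + z - max x (max y z) - min x (min y z)

variable {n : ℕ}

/-- Vertex type of the extended half-grid. -/
abbrev EV (n : ℕ) := ↥(halfVert n) ⊕ leafIdx n

/-- Projection to the grid. -/
def prj : EV n → ℕ × ℕ
  | Sum.inl a => a.val
  | Sum.inr ℓ => hgVert n ℓ.val

/-- Leaf indicator. -/
def lf : EV n → ℕ
  | Sum.inl _ => 0
  | Sum.inr _ => 1

/-- Claimed distance function on the extended half-grid. -/
def ddist (u v : EV n) : ℕ :=
  if u = v then 0 else ddL1 (prj u) (prj v) + lf u + lf v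

lemma ddL1_self (a : ℕ × ℕ) : ddL1 a a = 0 := by simp [ddL1]

lemma ddL1_tri (a b c : ℕ × ℕ) : ddL1 a c ≤ ddL1 a b + ddL1 b c := by
  unfold ddL1; omega

lemma ddist_self (u : EV n) : ddist u u = 0 := if_pos rfl

lemma ddist_of_ne {u v : EV n} (h : u ≠ v) :
    ddist u v = ddL1 (prj u) (prj v) + lf u + lf v := if_neg h

lemma ddist_le' (u v : EV n) :
    ddist u v ≤ ddL1 (prj u) (prj v) + lf u + lf v := by
  by_cases h : u = v
  · subst h; rw [ddist_self]; omega
  · rw [ddist_of_ne h]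

lemma ddist_inl (u : EV n) (A : halfVert n) :
    ddist u (Sum.inl A) = ddL1 (prj u) A.val + lf u := by
  by_cases h : u = Sum.inl A
  · subst h; rw [ddist_self]; simp [prj, lf, ddL1_self]
  · rw [ddist_of_ne h]; simp [prj, lf]

lemma ddist_inl' (A : halfVert n) (v : EV n) :
    ddist (Sum.inl A) v = ddL1 A.val (prj v) + lf v := by
  by_cases h : (Sum.inl A : EV n) = v
  · subst h; rw [ddist_self]; simp [prj, lf, ddL1_self]
  · rw [ddist_of_ne h]; simp [prj, lf]

lemma ddist_eq_zero {u v : EV n} (h : ddist u v = 0) : u = v := by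
  by_contra hne
  rw [ddist_of_ne hne] at h
  cases u with
  | inl a =>
    cases v with
    | inl b =>
      have hab : a.val = b.val := by
        have h1 : ddL1 a.val b.val = 0 := by simpa [lf, prj] using h
        unfold ddL1 at h1
        exact Prod.ext (by omega) (by omega)
      exact hne (congrArg Sum.inl (Subtype.ext hab))
    | inr ℓ => simp [lf] at h
  | inr ℓ =>
    cases v with
    | inl b => simp [lf] at h
    | inr k => simp [lf] at h

lemma ddist_adj {u v : EV n} (h : (extHalfGrid n).Adj u v) : ddist u v = 1 := by
  rw [ddist_of_ne h.ne]
  cases u with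
  | inl a =>
    cases v with
    | inl b =>
      have h' : gridAdj a.val b.val := h
      have : ddL1 a.val b.val = 1 := by
        unfold gridAdj at h'; unfold ddL1; omega
      simp [lf, prj, this]
    | inr ℓ =>
      have h' : a.val = hgVert n ℓ.val := h
      simp [lf, prj, h', ddL1_self]
  | inr ℓ =>
    cases v with
    | inl b =>
      have h' : b.val = hgVert n ℓ.val := h
      simp [lf, prj, h', ddL1_self]
    | inr k => exact absurd h (by simp [extHalfGrid])

lemma ddist_triangle (u v t : EV n) : ddist u t ≤ ddist u v + ddist v t := by
  by_cases huv : u = v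
  · subst huv; rw [ddist_self]; omega
  by_cases hvt : v = t
  · subst hvt; rw [ddist_self]; omega
  by_cases hut : u = t
  · subst hut; rw [ddist_self]; omega
  rw [ddist_of_ne huv, ddist_of_ne hvt, ddist_of_ne hut]
  have := ddL1_tri (prj u) (prj v) (prj t)
  omega

lemma ddist_le_walk {u v : EV n} (p : (extHalfGrid n).Walk u v) :
    ddist u v ≤ p.length := by
  induction p with
  | nil => rw [ddist_self]; omega
  | @cons a b c h q ih =>
    have h1 := ddist_adj h
    have h2 := ddist_triangle a b c
    rw [SimpleGraph.Walk.length_cons]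
    omega

lemma prj_mem (hn : 1 ≤ n) (u : EV n) : prj u ∈ halfVert n := by
  cases u with
  | inl a => exact a.2
  | inr ℓ =>
    obtain ⟨ℓ, h1, h2⟩ := ℓ
    show hgVert n ℓ ∈ halfVert n
    simp only [hgVert, halfVert, gridVert, Set.mem_setOf_eq]
    split_ifs <;> simp <;> omega

lemma halfVert_step_s8 {a b : ℕ × ℕ} (ha : a ∈ halfVert n) (hb : b ∈ halfVert n)
    (hne : a ≠ b) :
    ∃ a', a' ∈ halfVert n ∧ gridAdj a a' ∧ ddL1 a' b + 1 = ddL1 a b := by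
  obtain ⟨a1, a2⟩ := a
  obtain ⟨b1, b2⟩ := b
  simp only [halfVert, gridVert, Set.mem_setOf_eq] at ha hb
  rw [ne_eq, Prod.mk.injEq, not_and_or] at hne
  by_cases h1 : b1 < a1
  · exact ⟨(a1 - 1, a2),
      by simp only [halfVert, gridVert, Set.mem_setOf_eq]; omega,
      Or.inr ⟨rfl, Or.inr (show a1 - 1 + 1 = a1 by omega)⟩,
      by simp only [ddL1]; omega⟩
  by_cases h2 : a2 < b2
  · exact ⟨(a1, a2 + 1),
      by simp only [halfVert, gridVert, Set.mem_setOf_eq]; omega,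
      Or.inl ⟨rfl, Or.inl rfl⟩,
      by simp only [ddL1]; omega⟩
  by_cases h3 : b2 < a2
  · exact ⟨(a1, a2 - 1),
      by simp only [halfVert, gridVert, Set.mem_setOf_eq]; omega,
      Or.inl ⟨rfl, Or.inr (show a2 - 1 + 1 = a2 by omega)⟩,
      by simp only [ddL1]; omega⟩
  · exact ⟨(a1 + 1, a2),
      by simp only [halfVert, gridVert, Set.mem_setOf_eq]; omega,
      Or.inr ⟨rfl, Or.inl rfl⟩,
      by simp only [ddL1]; omega⟩

lemma inner_walk :
    ∀ (k : ℕ) (a b : ℕ × ℕ) (ha : a ∈ halfVert n) (hb : b ∈ halfVert n),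
      ddL1 a b ≤ k →
      ∃ w : (extHalfGrid n).Walk (Sum.inl ⟨a, ha⟩) (Sum.inl ⟨b, hb⟩),
        w.length = ddL1 a b := by
  intro k
  induction k with
  | zero =>
    intro a b ha hb hk
    have hab : a = b := by
      obtain ⟨a1, a2⟩ := a; obtain ⟨b1, b2⟩ := b
      simp only [ddL1] at hk
      simp only [Prod.mk.injEq]
      omega
    subst hab
    exact ⟨SimpleGraph.Walk.nil, by simp [ddL1_self]⟩
  | succ k ih =>
    intro a b ha hb hk
    by_cases hab : a = b
    · subst hab
      exact ⟨SimpleGraph.Walk.nil, by simp [ddL1_self]⟩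
    · obtain ⟨a', ha', hadj, hdec⟩ := halfVert_step_s8 ha hb hab
      have hadj' : (extHalfGrid n).Adj (Sum.inl ⟨a, ha⟩) (Sum.inl ⟨a', ha'⟩) := hadj
      obtain ⟨w, hw⟩ := ih a' b ha' hb (by omega)
      exact ⟨SimpleGraph.Walk.cons hadj' w,
        by rw [SimpleGraph.Walk.length_cons, hw]; omega⟩

lemma exists_walk_s8 (hn : 1 ≤ n) (u v : EV n) :
    ∃ w : (extHalfGrid n).Walk u v, w.length = ddist u v := by
  by_cases huv : u = v
  · subst huv; exact ⟨SimpleGraph.Walk.nil, by simp [ddist_self]⟩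
  rw [ddist_of_ne huv]
  cases u with
  | inl a =>
    cases v with
    | inl b =>
      obtain ⟨w, hw⟩ := inner_walk (ddL1 a.val b.val) a.val b.val a.2 b.2 le_rfl
      exact ⟨w, by simpa [lf, prj] using hw⟩
    | inr ℓ =>
      have hm : hgVert n ℓ.val ∈ halfVert n := prj_mem hn (Sum.inr ℓ)
      obtain ⟨w, hw⟩ := inner_walk (ddL1 a.val (hgVert n ℓ.val))
        a.val (hgVert n ℓ.val) a.2 hm le_rfl
      have hadj : (extHalfGrid n).Adj (Sum.inl ⟨hgVert n ℓ.val, hm⟩) (Sum.inr ℓ) := rfl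
      exact ⟨w.concat hadj,
        by rw [SimpleGraph.Walk.length_concat, hw]; all_goals simp only [prj, lf]; all_goals omega⟩
  | inr ℓ =>
    cases v with
    | inl b =>
      have hm : hgVert n ℓ.val ∈ halfVert n := prj_mem hn (Sum.inr ℓ)
      obtain ⟨w, hw⟩ := inner_walk (ddL1 (hgVert n ℓ.val) b.val)
        (hgVert n ℓ.val) b.val hm b.2 le_rfl
      have hadj : (extHalfGrid n).Adj (Sum.inr ℓ) (Sum.inl ⟨hgVert n ℓ.val, hm⟩) := rfl
      exact ⟨SimpleGraph.Walk.cons hadj w,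
        by rw [SimpleGraph.Walk.length_cons, hw]; all_goals simp only [prj, lf]; all_goals omega⟩
    | inr k =>
      have hmℓ : hgVert n ℓ.val ∈ halfVert n := prj_mem hn (Sum.inr ℓ)
      have hmk : hgVert n k.val ∈ halfVert n := prj_mem hn (Sum.inr k)
      obtain ⟨w, hw⟩ := inner_walk (ddL1 (hgVert n ℓ.val) (hgVert n k.val))
        (hgVert n ℓ.val) (hgVert n k.val) hmℓ hmk le_rfl
      have hadj1 : (extHalfGrid n).Adj (Sum.inr ℓ) (Sum.inl ⟨hgVert n ℓ.val, hmℓ⟩) := rfl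
      have hadj2 : (extHalfGrid n).Adj (Sum.inl ⟨hgVert n k.val, hmk⟩) (Sum.inr k) := rfl
      exact ⟨SimpleGraph.Walk.cons hadj1 (w.concat hadj2),
        by rw [SimpleGraph.Walk.length_cons, SimpleGraph.Walk.length_concat, hw]
           all_goals simp only [prj, lf]
           all_goals omega⟩

lemma ext_dist_eq (hn : 1 ≤ n) (u v : EV n) :
    (extHalfGrid n).dist u v = ddist u v := by
  obtain ⟨w, hw⟩ := exists_walk_s8 hn u v
  refine le_antisymm (hw ▸ SimpleGraph.dist_le w) ?_
  obtain ⟨p, hp⟩ := (SimpleGraph.Walk.reachable w).exists_walk_length_eq_dist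
  exact hp ▸ ddist_le_walk p

lemma leaf_not_mid {u v : EV n} {ℓ : leafIdx n}
    (hu : u ≠ Sum.inr ℓ) (hv : v ≠ Sum.inr ℓ)
    (h : ddist u (Sum.inr ℓ) + ddist (Sum.inr ℓ) v = ddist u v) : False := by
  rw [ddist_of_ne hu, ddist_of_ne (fun he => hv he.symm)] at h
  have ht := ddL1_tri (prj u) (prj (Sum.inr ℓ)) (prj v)
  have hle := ddist_le' u v
  have hlf : lf (Sum.inr ℓ : EV n) = 1 := rfl
  omega

lemma ddL1_mk (x1 x2 y1 y2 : ℕ) :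
    ddL1 (x1, x2) (y1, y2) = (max x1 y1 - min x1 y1) + (max x2 y2 - min x2 y2) := rfl

lemma med3_betw (x y z : ℕ) :
    (max x (med3 x y z) - min x (med3 x y z))
      + (max (med3 x y z) y - min (med3 x y z) y) = max x y - min x y := by
  unfold med3; omega

lemma med3_betw' (x y z : ℕ) :
    (max y (med3 x y z) - min y (med3 x y z))
      + (max (med3 x y z) z - min (med3 x y z) z) = max y z - min y z := by
  unfold med3; omega

lemma med3_betw'' (x y z : ℕ) :
    (max x (med3 x y z) - min x (med3 x y z))
      + (max (med3 x y z) z - min (med3 x y z) z) = max x z - min x z := by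
  unfold med3; omega

lemma med3_l1 (u1 u2 v1 v2 w1 w2 : ℕ) :
    ddL1 (u1, u2) (med3 u1 v1 w1, med3 u2 v2 w2)
      + ddL1 (med3 u1 v1 w1, med3 u2 v2 w2) (v1, v2) = ddL1 (u1, u2) (v1, v2) ∧
    ddL1 (v1, v2) (med3 u1 v1 w1, med3 u2 v2 w2)
      + ddL1 (med3 u1 v1 w1, med3 u2 v2 w2) (w1, w2) = ddL1 (v1, v2) (w1, w2) ∧
    ddL1 (u1, u2) (med3 u1 v1 w1, med3 u2 v2 w2)
      + ddL1 (med3 u1 v1 w1, med3 u2 v2 w2) (w1, w2) = ddL1 (u1, u2) (w1, w2) := by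
  simp only [ddL1_mk]
  refine ⟨?_, ?_, ?_⟩
  · have b1 := med3_betw u1 v1 w1
    have b2 := med3_betw u2 v2 w2
    omega
  · have c1 := med3_betw' u1 v1 w1
    have c2 := med3_betw' u2 v2 w2
    omega
  · have d1 := med3_betw'' u1 v1 w1
    have d2 := med3_betw'' u2 v2 w2
    omega

lemma l1_coord_tri (x m y : ℕ) :
    max x y - min x y ≤ (max x m - min x m) + (max m y - min m y) := by omega

lemma sum_split (p1 p2 q1 q2 r1 r2 : ℕ)
    (h : p1 + p2 + (q1 + q2) = r1 + r2) (t1 : r1 ≤ p1 + q1) (t2 : r2 ≤ p2 + q2) :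
    p1 + q1 = r1 ∧ p2 + q2 = r2 := by omega

lemma betw_of_eq {x y m : ℕ}
    (h : (max x m - min x m) + (max m y - min m y) = max x y - min x y) :
    min x y ≤ m ∧ m ≤ max x y := by omega

lemma med3_of_betw {x y z m : ℕ}
    (h1 : min x y ≤ m ∧ m ≤ max x y) (h2 : min y z ≤ m ∧ m ≤ max y z)
    (h3 : min x z ≤ m ∧ m ≤ max x z) : m = med3 x y z := by
  unfold med3; omega

lemma med3_unique (u1 u2 v1 v2 w1 w2 a1 a2 : ℕ)
    (h1 : ddL1 (u1, u2) (a1, a2) + ddL1 (a1, a2) (v1, v2) = ddL1 (u1, u2) (v1, v2))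
    (h2 : ddL1 (v1, v2) (a1, a2) + ddL1 (a1, a2) (w1, w2) = ddL1 (v1, v2) (w1, w2))
    (h3 : ddL1 (u1, u2) (a1, a2) + ddL1 (a1, a2) (w1, w2) = ddL1 (u1, u2) (w1, w2)) :
    a1 = med3 u1 v1 w1 ∧ a2 = med3 u2 v2 w2 := by
  simp only [ddL1_mk] at h1 h2 h3
  obtain ⟨e1, e2⟩ := sum_split _ _ _ _ _ _ h1 (l1_coord_tri u1 a1 v1) (l1_coord_tri u2 a2 v2)
  obtain ⟨f1, f2⟩ := sum_split _ _ _ _ _ _ h2 (l1_coord_tri v1 a1 w1) (l1_coord_tri v2 a2 w2)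
  obtain ⟨g1, g2⟩ := sum_split _ _ _ _ _ _ h3 (l1_coord_tri u1 a1 w1) (l1_coord_tri u2 a2 w2)
  exact ⟨med3_of_betw (betw_of_eq e1) (betw_of_eq f1) (betw_of_eq g1),
    med3_of_betw (betw_of_eq e2) (betw_of_eq f2) (betw_of_eq g2)⟩

lemma med3_l1' (U V W : ℕ × ℕ) :
    ddL1 U (med3 U.1 V.1 W.1, med3 U.2 V.2 W.2)
      + ddL1 (med3 U.1 V.1 W.1, med3 U.2 V.2 W.2) V = ddL1 U V ∧
    ddL1 V (med3 U.1 V.1 W.1, med3 U.2 V.2 W.2)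
      + ddL1 (med3 U.1 V.1 W.1, med3 U.2 V.2 W.2) W = ddL1 V W ∧
    ddL1 U (med3 U.1 V.1 W.1, med3 U.2 V.2 W.2)
      + ddL1 (med3 U.1 V.1 W.1, med3 U.2 V.2 W.2) W = ddL1 U W := by
  obtain ⟨u1, u2⟩ := U
  obtain ⟨v1, v2⟩ := V
  obtain ⟨w1, w2⟩ := W
  exact med3_l1 u1 u2 v1 v2 w1 w2

lemma med3_unique' (U V W A : ℕ × ℕ)
    (h1 : ddL1 U A + ddL1 A V = ddL1 U V)
    (h2 : ddL1 V A + ddL1 A W = ddL1 V W)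
    (h3 : ddL1 U A + ddL1 A W = ddL1 U W) :
    A = (med3 U.1 V.1 W.1, med3 U.2 V.2 W.2) := by
  obtain ⟨u1, u2⟩ := U
  obtain ⟨v1, v2⟩ := V
  obtain ⟨w1, w2⟩ := W
  obtain ⟨a1, a2⟩ := A
  obtain ⟨hx, hy⟩ := med3_unique u1 u2 v1 v2 w1 w2 a1 a2 h1 h2 h3
  simp only [Prod.mk.injEq]
  exact ⟨hx, hy⟩

lemma med3_mem' {U V W : ℕ × ℕ} (hU : U ∈ halfVert n) (hV : V ∈ halfVert n)
    (hW : W ∈ halfVert n) :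
    (med3 U.1 V.1 W.1, med3 U.2 V.2 W.2) ∈ halfVert n := by
  obtain ⟨u1, u2⟩ := U
  obtain ⟨v1, v2⟩ := V
  obtain ⟨w1, w2⟩ := W
  simp only [halfVert, gridVert, Set.mem_setOf_eq] at hU hV hW ⊢
  unfold med3
  omega

lemma median_exists_distinct (hn : 1 ≤ n) {u v w : EV n}
    (huv : u ≠ v) (hvw : v ≠ w) (huw : u ≠ w) :
    IsMedianVtx (extHalfGrid n) u v w
      (Sum.inl ⟨(med3 (prj u).1 (prj v).1 (prj w).1, med3 (prj u).2 (prj v).2 (prj w).2),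
        med3_mem' (prj_mem hn u) (prj_mem hn v) (prj_mem hn w)⟩) := by
  obtain ⟨m1, m2, m3⟩ := med3_l1' (prj u) (prj v) (prj w)
  refine ⟨?_, ?_, ?_⟩
  · simp only [ext_dist_eq hn, ddist_inl, ddist_inl', ddist_of_ne huv]
    omega
  · simp only [ext_dist_eq hn, ddist_inl, ddist_inl', ddist_of_ne hvw]
    omega
  · simp only [ext_dist_eq hn, ddist_inl, ddist_inl', ddist_of_ne huw]
    omega

lemma median_unique_distinct (hn : 1 ≤ n) {u v w m : EV n}
    (huv : u ≠ v) (hvw : v ≠ w) (huw : u ≠ w)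
    (hm : IsMedianVtx (extHalfGrid n) u v w m) :
    m = Sum.inl ⟨(med3 (prj u).1 (prj v).1 (prj w).1, med3 (prj u).2 (prj v).2 (prj w).2),
      med3_mem' (prj_mem hn u) (prj_mem hn v) (prj_mem hn w)⟩ := by
  obtain ⟨h1, h2, h3⟩ := hm
  simp only [ext_dist_eq hn] at h1 h2 h3
  cases m with
  | inr ℓ =>
    exfalso
    by_cases hu : u = Sum.inr ℓ
    · by_cases hw' : w = Sum.inr ℓ
      · exact huw (hu.trans hw'.symm)
      · by_cases hv : v = Sum.inr ℓ
        · exact huv (hu.trans hv.symm)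
        · exact leaf_not_mid hv hw' h2
    · by_cases hv : v = Sum.inr ℓ
      · by_cases hw' : w = Sum.inr ℓ
        · exact hvw (hv.trans hw'.symm)
        · exact leaf_not_mid hu hw' h3
      · exact leaf_not_mid hu hv h1
  | inl A =>
    simp only [ddist_inl, ddist_inl', ddist_of_ne huv] at h1
    simp only [ddist_inl, ddist_inl', ddist_of_ne hvw] at h2
    simp only [ddist_inl, ddist_inl', ddist_of_ne huw] at h3
    have e1 : ddL1 (prj u) A.val + ddL1 A.val (prj v) = ddL1 (prj u) (prj v) := by omega
    have e2 : ddL1 (prj v) A.val + ddL1 A.val (prj w) = ddL1 (prj v) (prj w) := by omega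
    have e3 : ddL1 (prj u) A.val + ddL1 A.val (prj w) = ddL1 (prj u) (prj w) := by omega
    exact congrArg Sum.inl
      (Subtype.ext (med3_unique' (prj u) (prj v) (prj w) A.val e1 e2 e3))

end Stmt8Aux

/-- For `n ≥ 2`, the extended half-grid `H^ext_{n+1}` with root
`ρ = (1,n)` is a median graph, and for all leaves `x_i, x_j` with `i < j` the median
`med(ρ, x_i, x_j)` is the vertex `(i, j-1)` of the half-grid. -/
theorem stmt_8 (n : ℕ) (hn : 2 ≤ n) (hρ : ((1, n) : ℕ × ℕ) ∈ halfVert n) :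
    IsMedianGraph (extHalfGrid n) ∧
    ∀ i j : leafIdx n, (i : ℕ) < (j : ℕ) →
      ∀ m : ↥(halfVert n) ⊕ leafIdx n,
        IsMedianVtx (extHalfGrid n) (Sum.inl ⟨(1, n), hρ⟩) (Sum.inr i) (Sum.inr j) m →
        ∃ hm : (((i : ℕ), (j : ℕ) - 1) : ℕ × ℕ) ∈ halfVert n,
          m = Sum.inl ⟨((i : ℕ), (j : ℕ) - 1), hm⟩ := by
  have hn1 : 1 ≤ n := by omega
  constructor
  · constructor
    · rw [SimpleGraph.connected_iff]
      exact ⟨fun u v => ⟨(exists_walk_s8 hn1 u v).choose⟩, ⟨Sum.inl ⟨(1, n), hρ⟩⟩⟩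
    · intro u v w
      by_cases huv : u = v
      · subst huv
        refine ⟨u, ?_, ?_⟩
        · refine ⟨?_, ?_, ?_⟩ <;> simp [SimpleGraph.dist_self]
        · intro m hm'
          have h := hm'.1
          simp only [ext_dist_eq hn1, ddist_self] at h
          exact (ddist_eq_zero (show ddist u m = 0 by omega)).symm
      · by_cases hvw : v = w
        · subst hvw
          refine ⟨v, ?_, ?_⟩
          · refine ⟨?_, ?_, ?_⟩ <;> simp [SimpleGraph.dist_self]
          · intro m hm'
            have h := hm'.2.1
            simp only [ext_dist_eq hn1, ddist_self] at h
            exact (ddist_eq_zero (show ddist v m = 0 by omega)).symm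
        · by_cases huw : u = w
          · subst huw
            refine ⟨u, ?_, ?_⟩
            · refine ⟨?_, ?_, ?_⟩ <;> simp [SimpleGraph.dist_self]
            · intro m hm'
              have h := hm'.2.2
              simp only [ext_dist_eq hn1, ddist_self] at h
              exact (ddist_eq_zero (show ddist u m = 0 by omega)).symm
          · exact ⟨_, median_exists_distinct hn1 huv hvw huw,
              fun m hm' => median_unique_distinct hn1 huv hvw huw hm'⟩
  · intro i j hij m hm
    have hne1 : (Sum.inl ⟨(1, n), hρ⟩ : EV n) ≠ Sum.inr i := fun h => Sum.inl_ne_inr h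
    have hne2 : (Sum.inl ⟨(1, n), hρ⟩ : EV n) ≠ Sum.inr j := fun h => Sum.inl_ne_inr h
    have hne3 : (Sum.inr i : EV n) ≠ Sum.inr j := by
      intro h
      injection h with h'
      rw [h'] at hij
      exact lt_irrefl _ hij
    have hmain := median_unique_distinct hn1 hne1 hne3 hne2 hm
    have hi := i.2
    have hj := j.2
    have hval : ((med3 (prj (Sum.inl ⟨(1, n), hρ⟩ : EV n)).1 (prj (Sum.inr i : EV n)).1
          (prj (Sum.inr j : EV n)).1,
        med3 (prj (Sum.inl ⟨(1, n), hρ⟩ : EV n)).2 (prj (Sum.inr i : EV n)).2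
          (prj (Sum.inr j : EV n)).2) : ℕ × ℕ) = ((i : ℕ), (j : ℕ) - 1) := by
      simp only [prj, hgVert]
      split_ifs <;> simp only [med3, Prod.mk.injEq] <;> constructor <;> omega
    have hmem2 : (((i : ℕ), (j : ℕ) - 1) : ℕ × ℕ) ∈ halfVert n := by
      simp only [halfVert, gridVert, Set.mem_setOf_eq]
      omega
    refine ⟨hmem2, ?_⟩
    rw [hmain]
    exact congrArg Sum.inl (Subtype.ext hval)
end

section
/- Let H^ext_{n+1} (n ≥ 2) be the extended half-grid with leaves L = {x_1,…,x_{n+1}} and root ρ. Then the assignment of unordered pairs of distinct leaves to medians, {x_i,x_j} ↦ med(ρ,x_i,x_j), is injective; that is, for every vertex w of the form med(ρ,x_i,x_j) with i < j, the pair (x_i,x_j) is uniquely determined by w. -/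
namespace Stmt9Aux

/-- `L1` distance on `ℕ × ℕ`. -/
def L1 (p q : ℕ × ℕ) : ℕ := (p.1 - q.1) + (q.1 - p.1) + (p.2 - q.2) + (q.2 - p.2)

lemma mem_halfVert_iff {n : ℕ} {p : ℕ × ℕ} :
    p ∈ halfVert n ↔ 1 ≤ p.1 ∧ p.1 ≤ n ∧ 1 ≤ p.2 ∧ p.2 ≤ n ∧ p.1 ≤ p.2 + 1 := by
  simp only [halfVert, gridVert, Set.mem_setOf_eq]
  tauto

lemma hgVert_eq {n ℓ : ℕ} (h1 : 1 ≤ ℓ) (h2 : ℓ ≤ n + 1) (hn : 1 ≤ n) :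
    hgVert n ℓ = (ℓ - (ℓ - n), ℓ - 1 + (2 - ℓ)) := by
  unfold hgVert
  split_ifs with ha hb <;> rw [Prod.mk.injEq] <;> constructor <;> omega

lemma hgVert_mem {n ℓ : ℕ} (h1 : 1 ≤ ℓ) (h2 : ℓ ≤ n + 1) (hn : 1 ≤ n) :
    hgVert n ℓ ∈ halfVert n := by
  rw [hgVert_eq h1 h2 hn, mem_halfVert_iff]
  simp only
  omega

/-- The claimed distance function on the extended half-grid. -/
def eD (n : ℕ) : (↥(halfVert n) ⊕ leafIdx n) → (↥(halfVert n) ⊕ leafIdx n) → ℕ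
  | Sum.inl a, Sum.inl b => L1 a.val b.val
  | Sum.inl a, Sum.inr ℓ => L1 a.val (hgVert n ℓ.val) + 1
  | Sum.inr ℓ, Sum.inl b => L1 (hgVert n ℓ.val) b.val + 1
  | Sum.inr ℓ, Sum.inr ℓ' =>
      if ℓ = ℓ' then 0 else L1 (hgVert n ℓ.val) (hgVert n ℓ'.val) + 2

lemma eD_ll {n : ℕ} (a b : ↥(halfVert n)) :
    eD n (Sum.inl a) (Sum.inl b) = L1 a.val b.val := rfl

lemma eD_lr {n : ℕ} (a : ↥(halfVert n)) (ℓ : leafIdx n) :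
    eD n (Sum.inl a) (Sum.inr ℓ) = L1 a.val (hgVert n ℓ.val) + 1 := rfl

lemma eD_rl {n : ℕ} (ℓ : leafIdx n) (b : ↥(halfVert n)) :
    eD n (Sum.inr ℓ) (Sum.inl b) = L1 (hgVert n ℓ.val) b.val + 1 := rfl

lemma eD_rr {n : ℕ} (ℓ ℓ' : leafIdx n) :
    eD n (Sum.inr ℓ) (Sum.inr ℓ') =
      if ℓ = ℓ' then 0 else L1 (hgVert n ℓ.val) (hgVert n ℓ'.val) + 2 := rfl

lemma eD_self {n : ℕ} (u : ↥(halfVert n) ⊕ leafIdx n) : eD n u u = 0 := by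
  rcases u with a | ℓ
  · simp [eD, L1]
  · simp [eD]

lemma L1_adj {p q : ℕ × ℕ} (h : gridAdj p q) (r : ℕ × ℕ) : L1 p r ≤ L1 q r + 1 := by
  simp only [gridAdj] at h
  simp only [L1]
  omega

lemma eD_adj_le {n : ℕ} {u u' : ↥(halfVert n) ⊕ leafIdx n}
    (v : ↥(halfVert n) ⊕ leafIdx n) (h : (extHalfGrid n).Adj u u') :
    eD n u v ≤ eD n u' v + 1 := by
  rcases u with a | ℓ <;> rcases u' with b | m
  · have hadj : gridAdj a.val b.val := h
    rcases v with c | t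
    · exact L1_adj hadj c.val
    · simpa [eD] using L1_adj hadj (hgVert n t.val)
  · have heq : a.val = hgVert n m.val := h
    rcases v with c | t
    · simp only [eD, heq]
      omega
    · by_cases hmt : m = t
      · subst hmt
        simp only [eD, if_pos rfl, heq, L1]
        omega
      · simp only [eD, if_neg hmt, heq]
        omega
  · have heq : b.val = hgVert n ℓ.val := h
    rcases v with c | t
    · simp only [eD, heq]
      omega
    · by_cases hlt : ℓ = t
      · subst hlt
        simp [eD]
      · simp only [eD, if_neg hlt, heq]
        omega
  · exact absurd h (by simp [extHalfGrid])

lemma eD_le_length {n : ℕ} {u v : ↥(halfVert n) ⊕ leafIdx n}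
    (w : (extHalfGrid n).Walk u v) : eD n u v ≤ w.length := by
  induction w with
  | nil => simp [eD_self]
  | @cons a b c h p ih =>
    have h1 := eD_adj_le (n := n) c h
    simp only [SimpleGraph.Walk.length_cons]
    omega

lemma grid_walk (n : ℕ) : ∀ (m : ℕ) (p q : ℕ × ℕ) (hp : p ∈ halfVert n)
    (hq : q ∈ halfVert n), L1 p q = m →
    ∃ w : (extHalfGrid n).Walk (Sum.inl ⟨p, hp⟩) (Sum.inl ⟨q, hq⟩), w.length = m := by
  intro m
  induction m with
  | zero =>
    intro p q hp hq h
    have hpq : p = q := by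
      simp only [L1] at h
      rw [Prod.ext_iff]
      omega
    subst hpq
    exact ⟨SimpleGraph.Walk.nil, rfl⟩
  | succ m ih =>
    intro p q hp hq h
    have hp' := mem_halfVert_iff.mp hp
    have hq' := mem_halfVert_iff.mp hq
    have key : ∃ p', gridAdj p p' ∧ p' ∈ halfVert n ∧ L1 p' q = m := by
      by_cases c1 : p.2 < q.2
      · refine ⟨(p.1, p.2 + 1), Or.inl ⟨rfl, Or.inl rfl⟩, mem_halfVert_iff.mpr ?_, ?_⟩
        · simp only
          omega
        · simp only [L1] at h ⊢
          omega
      · by_cases c2 : q.1 < p.1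
        · refine ⟨(p.1 - 1, p.2), Or.inr ⟨rfl, Or.inr (by omega)⟩,
            mem_halfVert_iff.mpr ?_, ?_⟩
          · simp only
            omega
          · simp only [L1] at h ⊢
            omega
        · by_cases c3 : q.2 < p.2
          · refine ⟨(p.1, p.2 - 1), Or.inl ⟨rfl, Or.inr (by omega)⟩,
              mem_halfVert_iff.mpr ?_, ?_⟩
            · simp only
              omega
            · simp only [L1] at h ⊢
              omega
          · refine ⟨(p.1 + 1, p.2), Or.inr ⟨rfl, Or.inl rfl⟩,
              mem_halfVert_iff.mpr ?_, ?_⟩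
            · simp only
              simp only [L1] at h
              omega
            · simp only [L1] at h ⊢
              omega
    obtain ⟨p', ha, hm, hl⟩ := key
    obtain ⟨w, hw⟩ := ih p' q hm hq hl
    have adj : (extHalfGrid n).Adj (Sum.inl ⟨p, hp⟩) (Sum.inl ⟨p', hm⟩) := ha
    exact ⟨SimpleGraph.Walk.cons adj w, by simp [hw]⟩

lemma exists_walk (n : ℕ) (hn : 1 ≤ n) (u v : ↥(halfVert n) ⊕ leafIdx n) :
    ∃ w : (extHalfGrid n).Walk u v, w.length = eD n u v := by
  rcases u with ⟨p, hp⟩ | ℓ <;> rcases v with ⟨q, hq⟩ | m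
  · exact grid_walk n _ p q hp hq rfl
  · have hv := hgVert_mem m.2.1 m.2.2 hn
    obtain ⟨w, hw⟩ := grid_walk n _ p (hgVert n m.val) hp hv rfl
    have adj : (extHalfGrid n).Adj (Sum.inl ⟨hgVert n m.val, hv⟩) (Sum.inr m) := rfl
    exact ⟨w.concat adj, by simp [SimpleGraph.Walk.length_concat, hw, eD]⟩
  · have hv := hgVert_mem ℓ.2.1 ℓ.2.2 hn
    obtain ⟨w, hw⟩ := grid_walk n _ (hgVert n ℓ.val) q hv hq rfl
    have adj : (extHalfGrid n).Adj (Sum.inr ℓ) (Sum.inl ⟨hgVert n ℓ.val, hv⟩) := rfl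
    exact ⟨SimpleGraph.Walk.cons adj w, by simp [hw, eD]⟩
  · by_cases hlm : ℓ = m
    · subst hlm
      exact ⟨SimpleGraph.Walk.nil, by simp [eD]⟩
    · have hv1 := hgVert_mem ℓ.2.1 ℓ.2.2 hn
      have hv2 := hgVert_mem m.2.1 m.2.2 hn
      obtain ⟨w, hw⟩ := grid_walk n _ (hgVert n ℓ.val) (hgVert n m.val) hv1 hv2 rfl
      have adj1 : (extHalfGrid n).Adj (Sum.inr ℓ) (Sum.inl ⟨hgVert n ℓ.val, hv1⟩) := rfl
      have adj2 : (extHalfGrid n).Adj (Sum.inl ⟨hgVert n m.val, hv2⟩) (Sum.inr m) := rfl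
      refine ⟨SimpleGraph.Walk.cons adj1 (w.concat adj2), ?_⟩
      simp [SimpleGraph.Walk.length_concat, hw, eD, if_neg hlm]

lemma dist_eq (n : ℕ) (hn : 1 ≤ n) (u v : ↥(halfVert n) ⊕ leafIdx n) :
    (extHalfGrid n).dist u v = eD n u v := by
  obtain ⟨w, hw⟩ := exists_walk n hn u v
  refine le_antisymm (hw ▸ SimpleGraph.dist_le w) ?_
  obtain ⟨w', hw'⟩ := SimpleGraph.Reachable.exists_walk_length_eq_dist ⟨w⟩
  calc eD n u v ≤ w'.length := eD_le_length w'
  _ = _ := hw'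


set_option maxHeartbeats 1000000 in
lemma solve (n : ℕ) (p : ℕ × ℕ) (a1 b1 a2 b2 : ℕ)
    (ha1 : 1 ≤ a1) (hb1 : 1 ≤ b1) (ha : a1 ≤ a2) (hb : b1 ≤ b2) (hbn : b2 ≤ n)
    (e1 : L1 (1, n) p + (L1 p (a1, b1) + 1) = L1 (1, n) (a1, b1) + 1)
    (e2 : (L1 (a1, b1) p + 1) + (L1 p (a2, b2) + 1) = L1 (a1, b1) (a2, b2) + 2)
    (e3 : L1 (1, n) p + (L1 p (a2, b2) + 1) = L1 (1, n) (a2, b2) + 1) :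
    p.1 = a1 ∧ p.2 = b2 := by
  simp only [L1] at e1 e2 e3 ⊢
  omega

lemma leaf_imp (n : ℕ) (u v : ℕ × ℕ)
    (e : L1 (1, n) u + 1 + (L1 u v + 2) = L1 (1, n) v + 1) : False := by
  simp only [L1] at e
  omega

end Stmt9Aux

set_option maxHeartbeats 4000000 in
/-- In the extended half-grid `H^ext_{n+1}` (`n ≥ 2`) with root
`ρ = (1,n)`, the assignment of pairs of distinct leaves to medians,
`{x_i, x_j} ↦ med(ρ, x_i, x_j)`, is injective: if `i < j` and `k < l` and the medians
of `(ρ, x_i, x_j)` and `(ρ, x_k, x_l)` coincide, then `i = k` and `j = l`. -/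
theorem stmt_9 (n : ℕ) (hn : 2 ≤ n) (hρ : ((1, n) : ℕ × ℕ) ∈ halfVert n)
    (i j k l : leafIdx n) (hij : (i : ℕ) < (j : ℕ)) (hkl : (k : ℕ) < (l : ℕ))
    (w : ↥(halfVert n) ⊕ leafIdx n)
    (h1 : IsMedianVtx (extHalfGrid n) (Sum.inl ⟨(1, n), hρ⟩) (Sum.inr i) (Sum.inr j) w)
    (h2 : IsMedianVtx (extHalfGrid n) (Sum.inl ⟨(1, n), hρ⟩) (Sum.inr k) (Sum.inr l) w) :
    i = k ∧ j = l := by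
  have hn1 : 1 ≤ n := by omega
  have hi := i.2
  have hj := j.2
  have hk := k.2
  have hl := l.2
  have sa1i : 1 ≤ (i : ℕ) - ((i : ℕ) - n) := by omega
  have sb1i : 1 ≤ (i : ℕ) - 1 + (2 - (i : ℕ)) := by omega
  have saij : (i : ℕ) - ((i : ℕ) - n) ≤ (j : ℕ) - ((j : ℕ) - n) := by omega
  have sbij : (i : ℕ) - 1 + (2 - (i : ℕ)) ≤ (j : ℕ) - 1 + (2 - (j : ℕ)) := by omega
  have sbnj : (j : ℕ) - 1 + (2 - (j : ℕ)) ≤ n := by omega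
  have sa1k : 1 ≤ (k : ℕ) - ((k : ℕ) - n) := by omega
  have sb1k : 1 ≤ (k : ℕ) - 1 + (2 - (k : ℕ)) := by omega
  have sakl : (k : ℕ) - ((k : ℕ) - n) ≤ (l : ℕ) - ((l : ℕ) - n) := by omega
  have sbkl : (k : ℕ) - 1 + (2 - (k : ℕ)) ≤ (l : ℕ) - 1 + (2 - (l : ℕ)) := by omega
  have sbnl : (l : ℕ) - 1 + (2 - (l : ℕ)) ≤ n := by omega
  have hijne : i ≠ j := by
    intro hh
    rw [hh] at hij
    omega
  have hklne : k ≠ l := by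
    intro hh
    rw [hh] at hkl
    omega
  obtain ⟨h11, h12, h13⟩ := h1
  obtain ⟨h21, h22, h23⟩ := h2
  rw [Stmt9Aux.dist_eq n hn1, Stmt9Aux.dist_eq n hn1, Stmt9Aux.dist_eq n hn1]
    at h11 h12 h13 h21 h22 h23
  have hgi := Stmt9Aux.hgVert_eq (n := n) i.2.1 i.2.2 hn1
  have hgj := Stmt9Aux.hgVert_eq (n := n) j.2.1 j.2.2 hn1
  have hgk := Stmt9Aux.hgVert_eq (n := n) k.2.1 k.2.2 hn1
  have hgl := Stmt9Aux.hgVert_eq (n := n) l.2.1 l.2.2 hn1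
  rcases w with ⟨p, hp⟩ | m
  · -- the median is a grid vertex
    simp only [Stmt9Aux.eD_ll, Stmt9Aux.eD_lr, Stmt9Aux.eD_rl, Stmt9Aux.eD_rr,
      if_neg hijne, if_neg hklne, hgi, hgj, hgk, hgl] at h11 h12 h13 h21 h22 h23
    obtain ⟨hx1, hy1⟩ := Stmt9Aux.solve n p _ _ _ _ sa1i sb1i saij sbij sbnj h11 h12 h13
    obtain ⟨hx2, hy2⟩ := Stmt9Aux.solve n p _ _ _ _ sa1k sb1k sakl sbkl sbnl h21 h22 h23
    clear h11 h12 h13 h21 h22 h23 hgi hgj hgk hgl hp hρ hijne hklne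
    refine ⟨Subtype.ext ?_, Subtype.ext ?_⟩ <;> omega
  · -- the median is a leaf: impossible
    exfalso
    by_cases hmi : m = i
    · subst hmi
      simp only [Stmt9Aux.eD_lr, Stmt9Aux.eD_rr, if_neg hijne] at h13
      exact Stmt9Aux.leaf_imp n _ _ h13
    · simp only [Stmt9Aux.eD_lr, Stmt9Aux.eD_rr, if_neg hmi] at h11
      exact Stmt9Aux.leaf_imp n _ _ h11
end

section
/- Let δ : X×X → Υ be a symmetric map on a finite set X with |X| ≥ 2, let Mmax(δ) be the (partition of X formed by the) inclusion-maximal strong modules of δ that are proper subsets of X, and let δ/Mmax(δ) be the quotient map. Then δ/Mmax(δ) is either complete or prime. Moreover, if δ is a symbolic ultrametric, then δ/Mmax(δ) is complete. -/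
/-- `M` is a module of `δ` relative to the ground set `A`: `M ⊆ A` and all elements
of `M` have the same `δ`-relation to every element of `A ∖ M`.  (For `A = Set.univ`
this is the usual notion of a module of `δ`; for general `A` it is the notion of a
module of the restriction `δ|A`.) -/
def IsModuleOn {X Υ : Type*} (δ : X → X → Υ) (A M : Set X) : Prop :=
  M ⊆ A ∧ ∀ x ∈ M, ∀ y ∈ M, ∀ z ∈ A \ M, δ x z = δ y z

/-- `M` is a strong module of `δ` relative to the ground set `A`: a module that does
not overlap any other module, i.e. `M ∩ M' ∈ {M, M', ∅}` for every module `M'`. -/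
def IsStrongModuleOn {X Υ : Type*} (δ : X → X → Υ) (A M : Set X) : Prop :=
  IsModuleOn δ A M ∧
  ∀ M', IsModuleOn δ A M' → M ∩ M' = M ∨ M ∩ M' = M' ∨ M ∩ M' = ∅

/-- `Mmax δ A`: the set of inclusion-maximal strong modules of `δ|A` that are proper
subsets of the ground set `A`. -/
def Mmax {X Υ : Type*} (δ : X → X → Υ) (A : Set X) : Set (Set X) :=
  {M | IsStrongModuleOn δ A M ∧ M ≠ A ∧
    ∀ M', IsStrongModuleOn δ A M' → M' ≠ A → M ⊆ M' → M' = M}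

/-- The quotient map `δ|A / Mmax(δ|A)` is complete: it assigns the same label to every
pair of distinct elements of `Mmax δ A` (labels being read off via representatives,
which is well-defined for disjoint modules). -/
def QuotientComplete {X Υ : Type*} (δ : X → X → Υ) (A : Set X) : Prop :=
  ∀ M ∈ Mmax δ A, ∀ N ∈ Mmax δ A, ∀ M' ∈ Mmax δ A, ∀ N' ∈ Mmax δ A,
    M ≠ N → M' ≠ N' →
    ∀ x ∈ M, ∀ y ∈ N, ∀ x' ∈ M', ∀ y' ∈ N', δ x y = δ x' y'

/-- The quotient map `δ|A / Mmax(δ|A)` is prime: every module `𝒮` of the quotient map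
(a set of elements of `Mmax δ A` all of whose members have the same quotient label to
each member of `Mmax δ A` outside `𝒮`, labels read off via representatives) is
trivial, i.e. empty, everything, or a singleton. -/
def QuotientPrime {X Υ : Type*} (δ : X → X → Υ) (A : Set X) : Prop :=
  ∀ 𝒮 ⊆ Mmax δ A,
    (∀ M ∈ 𝒮, ∀ M' ∈ 𝒮, ∀ N ∈ Mmax δ A \ 𝒮,
      ∀ x ∈ M, ∀ x' ∈ M', ∀ z ∈ N, δ x z = δ x' z) →
    𝒮 = ∅ ∨ 𝒮 = Mmax δ A ∨ ∃ M, 𝒮 = {M}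

/-- `δ` is a symbolic ultrametric: a symmetric map satisfying
(U1) there is no 4-element subset `{x,y,u,v}` with
`δ(x,y) = δ(y,u) = δ(u,v) ≠ δ(y,v) = δ(x,v) = δ(x,u)`, and
(U2) `|{δ(x,y), δ(x,z), δ(y,z)}| ≤ 2` for all distinct `x, y, z`. -/
def SymbolicUltrametric {X Υ : Type*} (δ : X → X → Υ) : Prop :=
  (¬ ∃ x y u v : X, x ≠ y ∧ x ≠ u ∧ x ≠ v ∧ y ≠ u ∧ y ≠ v ∧ u ≠ v ∧
      δ x y = δ y u ∧ δ y u = δ u v ∧ δ y v = δ x v ∧ δ x v = δ x u ∧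
      δ x y ≠ δ y v) ∧
  (∀ x y z : X, x ≠ y → x ≠ z → y ≠ z →
    ({δ x y, δ x z, δ y z} : Set Υ).ncard ≤ 2)


set_option linter.unusedSectionVars false
set_option linter.unusedVariables false
set_option maxHeartbeats 1000000

section RelAux

variable {X : Type*} [DecidableEq X]

lemma rtg_symm' {r : X → X → Prop} (h : ∀ x y, r x y → r y x) {a b : X}
    (hab : Relation.ReflTransGen r a b) : Relation.ReflTransGen r b a := by
  induction hab with
  | refl => exact .refl
  | tail _ h2 ih => exact Relation.ReflTransGen.trans (.single (h _ _ h2)) ih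

def ROn (r : X → X → Prop) (A : Finset X) (x y : X) : Prop := x ∈ A ∧ y ∈ A ∧ r x y

def ConnOn (r : X → X → Prop) (A : Finset X) : Prop :=
  ∀ x ∈ A, ∀ y ∈ A, Relation.ReflTransGen (ROn r A) x y

lemma ron_symm {r : X → X → Prop} (h : ∀ x y, r x y → r y x) (A : Finset X) :
    ∀ x y, ROn r A x y → ROn r A y x := fun _ _ ⟨h1, h2, h3⟩ => ⟨h2, h1, h _ _ h3⟩

lemma rtg_first_step {r : X → X → Prop} {A : Finset X} {x y : X}
    (h : Relation.ReflTransGen (ROn r A) x y) (hxy : x ≠ y) :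
    ∃ z, z ∈ A ∧ r x z ∧ Relation.ReflTransGen (ROn r A) z y := by
  rcases (Relation.ReflTransGen.cases_head h) with h | ⟨z, hz, h2⟩
  · exact absurd h hxy
  · exact ⟨z, hz.2.1, hz.2.2, h2⟩

lemma rtg_crossing {r : X → X → Prop} {A : Finset X} (P : X → Prop) {a z : X}
    (h : Relation.ReflTransGen (ROn r A) a z) (ha : P a) (hz : ¬ P z) :
    ∃ x y, P x ∧ ¬ P y ∧ ROn r A x y ∧ Relation.ReflTransGen (ROn r A) a x := by
  induction h with
  | refl => exact absurd ha hz
  | @tail b c hab hbc ih =>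
    by_cases hb : P b
    · exact ⟨b, c, hb, hz, hbc, hab⟩
    · exact ih hb

lemma rtg_avoid {r : X → X → Prop} (hirr : ∀ x y, r x y → x ≠ y) {A : Finset X} {v w z : X}
    (h : Relation.ReflTransGen (ROn r A) w z) (hz : z ≠ v) :
    Relation.ReflTransGen (ROn r (A.erase v)) w z ∨
      ∃ a, a ∈ A.erase v ∧ r v a ∧ Relation.ReflTransGen (ROn r (A.erase v)) a z := by
  induction h with
  | refl => exact .inl .refl
  | @tail b c hab hbc ih =>
    by_cases hbv : b = v
    · have hbc' : ROn r A v c := hbv ▸ hbc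
      have hcA : c ∈ A.erase v := Finset.mem_erase.2 ⟨(hirr _ _ hbc'.2.2).symm, hbc'.2.1⟩
      exact .inr ⟨c, hcA, hbc'.2.2, .refl⟩
    · have hcA : c ∈ A.erase v := Finset.mem_erase.2 ⟨hz, hbc.2.1⟩
      have hbA : b ∈ A.erase v := Finset.mem_erase.2 ⟨hbv, hbc.1⟩
      have step : ROn r (A.erase v) b c := ⟨hbA, hcA, hbc.2.2⟩
      rcases ih hbv with h1 | ⟨a, ha1, ha2, ha3⟩
      · exact .inl (h1.tail step)
      · exact .inr ⟨a, ha1, ha2, ha3.tail step⟩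

lemma reach_from_nbr {r : X → X → Prop} (hirr : ∀ x y, r x y → x ≠ y) {A : Finset X} {v : X}
    (hv : v ∈ A) (hconn : ConnOn r A) {z : X} (hz : z ∈ A.erase v) :
    ∃ a, a ∈ A.erase v ∧ r v a ∧ Relation.ReflTransGen (ROn r (A.erase v)) a z := by
  have hzv : z ≠ v := (Finset.mem_erase.1 hz).1
  have hzA : z ∈ A := (Finset.mem_erase.1 hz).2
  obtain ⟨w, hwA, hrvw, hrest⟩ := rtg_first_step (hconn v hv z hzA) (Ne.symm hzv)
  have hwv : w ≠ v := (hirr _ _ hrvw).symm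
  have hw' : w ∈ A.erase v := Finset.mem_erase.2 ⟨hwv, hwA⟩
  rcases rtg_avoid hirr hrest hzv with h1 | ⟨a, ha1, ha2, ha3⟩
  · exact ⟨w, hw', hrvw, h1⟩
  · exact ⟨a, ha1, ha2, ha3⟩

lemma seinsche_step {r s : X → X → Prop}
    (hrsym : ∀ x y, r x y → r y x) (hssym : ∀ x y, s x y → s y x)
    (hrirr : ∀ x y, r x y → x ≠ y) (hsirr : ∀ x y, s x y → x ≠ y)
    (htot : ∀ x y, x ≠ y → r x y ∨ s x y) (hexcl : ∀ x y, r x y → s x y → False)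
    {A : Finset X} {v : X} (hv : v ∈ A) (hA : 3 ≤ A.card)
    (hcr : ConnOn r A) (hcs : ConnOn s A) (hdis : ¬ ConnOn r (A.erase v)) :
    ∃ a b u, r v a ∧ r a b ∧ r v u ∧ s v b ∧ s b u ∧ s a u := by
  set A' := A.erase v with hA'
  unfold ConnOn at hdis
  push_neg at hdis
  obtain ⟨p, hp, q, hq, hnpq⟩ := hdis
  obtain ⟨ap, hapA, hrvap, hpathp⟩ := reach_from_nbr hrirr hv hcr hp
  obtain ⟨aq, haqA, hrvaq, hpathq⟩ := reach_from_nbr hrirr hv hcr hq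
  have hnconn : ¬ Relation.ReflTransGen (ROn r A') ap aq := by
    intro h
    exact hnpq (((rtg_symm' (ron_symm hrsym A') hpathp).trans h).trans hpathq)
  -- an s-neighbor of v
  have hzex : ∃ z, z ∈ A' := by
    have : 0 < A'.card := by
      rw [hA', Finset.card_erase_of_mem hv]; omega
    exact Finset.card_pos.1 this
  obtain ⟨z0, hz0⟩ := hzex
  obtain ⟨w, hwA, hsvw, _⟩ := rtg_first_step (hcs v hv z0 (Finset.mem_erase.1 hz0).2)
    (Ne.symm (Finset.mem_erase.1 hz0).1)
  have hwA' : w ∈ A' := Finset.mem_erase.2 ⟨(hsirr _ _ hsvw).symm, hwA⟩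
  obtain ⟨aw, hawA, hrvaw, hpathw⟩ := reach_from_nbr hrirr hv hcr hwA'
  have hnrvw : ¬ r v w := fun h => hexcl v w h hsvw
  obtain ⟨a, b, hPa, hPb, hstep, hreach⟩ := rtg_crossing (fun x => r v x) hpathw hrvaw hnrvw
  have haA' : a ∈ A' := hstep.1
  have hbA' : b ∈ A' := hstep.2.1
  -- choose u not connected to a in A'
  obtain ⟨u, huA', hrvu, hnau⟩ :
      ∃ u, u ∈ A' ∧ r v u ∧ ¬ Relation.ReflTransGen (ROn r A') a u := by
    by_cases hc : Relation.ReflTransGen (ROn r A') ap a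
    · exact ⟨aq, haqA, hrvaq, fun h => hnconn (hc.trans h)⟩
    · exact ⟨ap, hapA, hrvap, fun h => hc (rtg_symm' (ron_symm hrsym A') h)⟩
  have hnbu : ¬ Relation.ReflTransGen (ROn r A') b u := fun h => hnau (h.head hstep)
  have hsvb : s v b := by
    have hvb : v ≠ b := Ne.symm (Finset.mem_erase.1 hbA').1
    rcases htot v b hvb with h | h
    · exact absurd h hPb
    · exact h
  have hsau : s a u := by
    have hau : a ≠ u := fun h => hnau (h ▸ Relation.ReflTransGen.refl)
    rcases htot a u hau with h | h
    · exact absurd (Relation.ReflTransGen.single ⟨haA', huA', h⟩) hnau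
    · exact h
  have hsbu : s b u := by
    have hbu : b ≠ u := fun h => hnbu (h ▸ Relation.ReflTransGen.refl)
    rcases htot b u hbu with h | h
    · exact absurd (Relation.ReflTransGen.single ⟨hbA', huA', h⟩) hnbu
    · exact h
  exact ⟨a, b, u, hPa, hstep.2.2, hrvu, hsvb, hsbu, hsau⟩

lemma no_both_conn {r s : X → X → Prop}
    (hrsym : ∀ x y, r x y → r y x) (hssym : ∀ x y, s x y → s y x)
    (hrirr : ∀ x y, r x y → x ≠ y) (hsirr : ∀ x y, s x y → x ≠ y)
    (htot : ∀ x y, x ≠ y → r x y ∨ s x y) (hexcl : ∀ x y, r x y → s x y → False)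
    (hP4r : ∀ v a b u, r v a → r a b → r v u → s v b → s b u → s a u → False)
    (hP4s : ∀ v a b u, s v a → s a b → s v u → r v b → r b u → r a u → False) :
    ∀ (n : ℕ) (A : Finset X), A.card ≤ n → 2 ≤ A.card → ConnOn r A → ConnOn s A → False := by
  intro n
  induction n with
  | zero => intro A h h2 _ _; omega
  | succ n ih =>
    intro A hle h2 hcr hcs
    by_cases h3 : 3 ≤ A.card
    · obtain ⟨v, hv⟩ := Finset.card_pos.1 (by omega : 0 < A.card)
      have hcard' : (A.erase v).card = A.card - 1 := Finset.card_erase_of_mem hv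
      by_cases hboth : ConnOn r (A.erase v) ∧ ConnOn s (A.erase v)
      · exact ih (A.erase v) (by omega) (by omega) hboth.1 hboth.2
      · rcases not_and_or.1 hboth with hdr | hds
        · obtain ⟨a, b, u, p1, p2, p3, p4, p5, p6⟩ :=
            seinsche_step hrsym hssym hrirr hsirr htot hexcl hv h3 hcr hcs hdr
          exact hP4r v a b u p1 p2 p3 p4 p5 p6
        · obtain ⟨a, b, u, p1, p2, p3, p4, p5, p6⟩ :=
            seinsche_step hssym hrsym hsirr hrirr
              (fun x y hxy => (htot x y hxy).symm) (fun x y h1 h2 => hexcl x y h2 h1)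
              hv h3 hcs hcr hds
          exact hP4s v a b u p1 p2 p3 p4 p5 p6
    · have hc2 : A.card = 2 := by omega
      obtain ⟨x, y, hxy, hAxy⟩ := Finset.card_eq_two.1 hc2
      have hx : x ∈ A := by rw [hAxy]; simp
      have hy : y ∈ A := by rw [hAxy]; simp
      obtain ⟨z, hzA, hrxz, _⟩ := rtg_first_step (hcr x hx y hy) hxy
      obtain ⟨z', hz'A, hsxz', _⟩ := rtg_first_step (hcs x hx y hy) hxy
      have hz : z = y := by
        have h1 := hrirr x z hrxz
        rw [hAxy] at hzA
        simp only [Finset.mem_insert, Finset.mem_singleton] at hzA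
        tauto
      have hz' : z' = y := by
        have h1 := hsirr x z' hsxz'
        rw [hAxy] at hz'A
        simp only [Finset.mem_insert, Finset.mem_singleton] at hz'A
        tauto
      exact hexcl x y (hz ▸ hrxz) (hz' ▸ hsxz')

end RelAux

lemma two_of_three {Υ : Type*} {a b c : Υ} (h : ({a, b, c} : Set Υ).ncard ≤ 2) :
    a = b ∨ a = c ∨ b = c := by
  by_contra hcon
  push_neg at hcon
  obtain ⟨h1, h2, h3⟩ := hcon
  have h4 : ({a, b, c} : Set Υ).ncard = 3 := by
    rw [Set.ncard_insert_of_notMem (by simp [h1, h2]) (Set.toFinite _),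
        Set.ncard_insert_of_notMem (by simp [h3]) (Set.toFinite _),
        Set.ncard_singleton]
  omega

section D1
variable {X Υ : Type*} [Fintype X]

/-- D1 : some color graph is connected (spanning). -/
lemma exists_conn_color (h2 : 2 ≤ Fintype.card X) (δ : X → X → Υ)
    (hsym : ∀ x y : X, x ≠ y → δ x y = δ y x)
    (hU2 : ∀ x y z : X, x ≠ y → x ≠ z → y ≠ z →
      ({δ x y, δ x z, δ y z} : Set Υ).ncard ≤ 2) :
    ∃ c : Υ, ∀ x y : X, Relation.ReflTransGen (fun a b => a ≠ b ∧ δ a b = c) x y := by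
  classical
  set S : Set (X × X) := {p | p.1 ≠ p.2} with hS
  have hSne : S.Nonempty := by
    obtain ⟨x, y, hxy⟩ := Fintype.exists_pair_of_one_lt_card
      (by omega : 1 < Fintype.card X)
    exact ⟨(x, y), hxy⟩
  obtain ⟨p, hpS, hmax⟩ := Set.Finite.exists_maximalFor
    (fun p : X × X => {z | Relation.ReflTransGen
      (fun a b => a ≠ b ∧ δ a b = δ p.1 p.2) p.1 z}.ncard) S (Set.toFinite S) hSne
  set c := δ p.1 p.2 with hc
  set g : X → X → Prop := fun a b => a ≠ b ∧ δ a b = c with hg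
  have hgsym : ∀ x y, g x y → g y x := by
    rintro x y ⟨h1, h2⟩
    exact ⟨h1.symm, by rw [← hsym x y h1]; exact h2⟩
  set K : Set X := {z | Relation.ReflTransGen g p.1 z} with hK
  by_cases hKuniv : ∀ z, z ∈ K
  · refine ⟨c, fun x y => ?_⟩
    exact (rtg_symm' hgsym (hKuniv x)).trans (hKuniv y)
  · push_neg at hKuniv
    obtain ⟨v, hv⟩ := hKuniv
    exfalso
    have hp1K : p.1 ∈ K := Relation.ReflTransGen.refl
    have hvp1 : v ≠ p.1 := fun h => hv (h ▸ hp1K)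
    -- all labels from v to K equal δ v p.1 and differ from c
    have claim : ∀ k, Relation.ReflTransGen g p.1 k → δ v k = δ v p.1 ∧ δ v k ≠ c := by
      intro k hk
      induction hk with
      | refl =>
        refine ⟨rfl, fun h => hv ?_⟩
        exact Relation.ReflTransGen.single ⟨hvp1.symm, by rw [hsym p.1 v hvp1.symm]; exact h⟩
      | @tail k k' hK1 hedge ih =>
        have hkK : k ∈ K := hK1
        have hk'K : k' ∈ K := hK1.tail hedge
        have hvk : v ≠ k := fun h => hv (h ▸ hkK)
        have hvk' : v ≠ k' := fun h => hv (h ▸ hk'K)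
        have hne' : δ v k' ≠ c := by
          intro h
          exact hv (hk'K.tail ⟨hvk'.symm, by rw [hsym k' v hvk'.symm]; exact h⟩)
        have h3 := hU2 v k k' hvk hvk' hedge.1
        rcases two_of_three h3 with h | h | h
        · exact ⟨h.symm ▸ ih.1, h.symm ▸ ih.2⟩
        · exact absurd (hedge.2 ▸ h) ih.2
        · exact absurd (hedge.2 ▸ h) hne'
    set d := δ v p.1 with hd
    set Kv : Set X := {z | Relation.ReflTransGen
      (fun a b => a ≠ b ∧ δ a b = d) v z} with hKv
    have hKsub : insert v K ⊆ Kv := by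
      rintro z (rfl | hz)
      · exact Relation.ReflTransGen.refl
      · obtain ⟨hz1, hz2⟩ := claim z hz
        have : v ≠ z := fun h => hv (h ▸ hz)
        exact Relation.ReflTransGen.single ⟨this, hz1⟩
    have hlt : K.ncard < Kv.ncard := by
      calc K.ncard < (insert v K).ncard := by
            exact Set.ncard_lt_ncard (Set.ssubset_insert hv) (Set.toFinite _)
        _ ≤ Kv.ncard := Set.ncard_le_ncard hKsub (Set.toFinite _)
    have hvS : (v, p.1) ∈ S := hvp1
    have h5 : K.ncard ≤ Kv.ncard → K.ncard = Kv.ncard := fun h => le_antisymm h (hmax hvS h)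
    exact absurd (h5 (le_of_lt hlt)) (ne_of_lt hlt)
end D1

section ModAux
variable {X Υ : Type*} [Fintype X] (δ : X → X → Υ)

lemma rtg_symm'' {r : X → X → Prop} (h : ∀ x y, r x y → r y x) {a b : X}
    (hab : Relation.ReflTransGen r a b) : Relation.ReflTransGen r b a := by
  induction hab with
  | refl => exact .refl
  | tail _ h2 ih => exact Relation.ReflTransGen.trans (.single (h _ _ h2)) ih

lemma rtg_crossing_gen {r : X → X → Prop} (P : X → Prop) {a z : X}
    (h : Relation.ReflTransGen r a z) (ha : P a) (hz : ¬ P z) :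
    ∃ x y, P x ∧ ¬ P y ∧ r x y := by
  induction h with
  | refl => exact absurd ha hz
  | @tail b c hab hbc ih =>
    by_cases hb : P b
    · exact ⟨b, c, hb, hz, hbc⟩
    · exact ih hb

lemma mod_singleton (x : X) : IsModuleOn δ Set.univ {x} := by
  refine ⟨Set.subset_univ _, ?_⟩
  intro a ha b hb z _
  rw [Set.mem_singleton_iff] at ha hb
  subst ha; subst hb; rfl

lemma strong_singleton (x : X) : IsStrongModuleOn δ Set.univ {x} := by
  refine ⟨mod_singleton δ x, fun M' _ => ?_⟩
  rcases Set.subset_singleton_iff_eq.1 (Set.inter_subset_left) with h | h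
  · exact .inr (.inr h)
  · exact .inl h

lemma exists_mmax_above {S : Set X} (hS : IsStrongModuleOn δ Set.univ S)
    (hSne : S ≠ Set.univ) : ∃ M ∈ Mmax δ Set.univ, S ⊆ M := by
  classical
  obtain ⟨T, hT, hTmax⟩ := Set.Finite.exists_maximalFor id
    {T | IsStrongModuleOn δ Set.univ T ∧ T ≠ Set.univ ∧ S ⊆ T}
    (Set.toFinite _) ⟨S, hS, hSne, subset_rfl⟩
  refine ⟨T, ⟨hT.1, hT.2.1, fun M' h1 h2' h3 => ?_⟩, hT.2.2⟩
  exact Set.Subset.antisymm (hTmax ⟨h1, h2', hT.2.2.trans h3⟩ h3) h3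

lemma singleton_ne_univ (h2 : 2 ≤ Fintype.card X) (x : X) : ({x} : Set X) ≠ Set.univ := by
  have : Nontrivial X := Fintype.one_lt_card_iff_nontrivial.1 (by omega)
  obtain ⟨y, hy⟩ := exists_ne x
  intro h
  exact hy (Set.mem_singleton_iff.1 (h ▸ Set.mem_univ y))

lemma exists_mmax_mem (h2 : 2 ≤ Fintype.card X) (x : X) :
    ∃ M ∈ Mmax δ Set.univ, x ∈ M := by
  obtain ⟨M, hM, hsub⟩ := exists_mmax_above δ (strong_singleton δ x)
    (singleton_ne_univ h2 x)
  exact ⟨M, hM, hsub rfl⟩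

lemma mmax_disj {M N : Set X} (hM : M ∈ Mmax δ Set.univ) (hN : N ∈ Mmax δ Set.univ)
    (hMN : M ≠ N) : M ∩ N = ∅ := by
  rcases hM.1.2 N hN.1.1 with h | h | h
  · rw [Set.inter_eq_left] at h
    exact absurd (hM.2.2 N hN.1 hN.2.1 h).symm hMN
  · rw [Set.inter_eq_right] at h
    exact absurd (hN.2.2 M hM.1 hM.2.1 h) hMN
  · exact h

lemma mmax_nonempty (h2 : 2 ≤ Fintype.card X) {M : Set X}
    (hM : M ∈ Mmax δ Set.univ) : M.Nonempty := by
  rcases Set.eq_empty_or_nonempty M with h | h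
  · exfalso
    have hnt : Nontrivial X := Fintype.one_lt_card_iff_nontrivial.1 (by omega)
    obtain ⟨x⟩ := (inferInstance : Nonempty X)
    have h5 := hM.2.2 {x} (strong_singleton δ x) (singleton_ne_univ h2 x)
      (h ▸ Set.empty_subset _)
    rw [h] at h5
    exact Set.singleton_ne_empty x h5
  · exact h

end ModAux

section LemA
variable {X Υ : Type*} [Fintype X] (δ : X → X → Υ)

/-- Lemma A: if some "non-c graph" is disconnected, the quotient is complete. -/
lemma lemA (h2 : 2 ≤ Fintype.card X)
    (hsym : ∀ x y : X, x ≠ y → δ x y = δ y x) {c : Υ} {x0 y0 : X}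
    (hdis : ¬ Relation.ReflTransGen (fun a b => a ≠ b ∧ δ a b ≠ c) x0 y0) :
    ∀ M ∈ Mmax δ Set.univ, ∀ N ∈ Mmax δ Set.univ,
      ∀ M' ∈ Mmax δ Set.univ, ∀ N' ∈ Mmax δ Set.univ,
      M ≠ N → M' ≠ N' →
      ∀ x ∈ M, ∀ y ∈ N, ∀ x' ∈ M', ∀ y' ∈ N', δ x y = δ x' y' := by
  classical
  have hesym : ∀ x y : X, (x ≠ y ∧ δ x y ≠ c) → (y ≠ x ∧ δ y x ≠ c) := by
    rintro x y ⟨h1, hh⟩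
    exact ⟨h1.symm, by rw [← hsym x y h1]; exact hh⟩
  set e : X → X → Prop := fun a b => a ≠ b ∧ δ a b ≠ c with he
  set cls : X → Set X := fun x => {y | Relation.ReflTransGen e x y} with hcls
  have hmem : ∀ {x y : X}, y ∈ cls x ↔ Relation.ReflTransGen e x y := by
    intro x y; rfl
  have hRsymm : ∀ {a b : X}, Relation.ReflTransGen e a b → Relation.ReflTransGen e b a :=
    fun h => rtg_symm'' hesym h
  have hedge : ∀ {x a z : X}, a ∈ cls x → z ∉ cls x → δ a z = c := by
    intro x a z ha hz
    by_contra hne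
    have haz : a ≠ z := fun h => hz (h ▸ ha)
    exact hz (Relation.ReflTransGen.tail ha ⟨haz, hne⟩)
  have cls_mod : ∀ x : X, IsModuleOn δ Set.univ (cls x) := by
    intro x
    refine ⟨Set.subset_univ _, ?_⟩
    intro a ha b hb z hz
    have hz' : z ∉ cls x := hz.2
    rw [hedge ha hz', hedge hb hz']
  have compl_mod : ∀ x : X, IsModuleOn δ Set.univ (Set.univ \ cls x) := by
    intro x
    refine ⟨Set.subset_univ _, ?_⟩
    intro a ha b hb z hz
    have hzc : z ∈ cls x := by
      by_contra hzc
      exact hz.2 ⟨Set.mem_univ z, hzc⟩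
    have haz : a ≠ z := fun h => ha.2 (h ▸ hzc)
    have hbz : b ≠ z := fun h => hb.2 (h ▸ hzc)
    rw [hsym a z haz, hsym b z hbz, hedge hzc ha.2, hedge hzc hb.2]
  have cls_strong : ∀ x : X, IsStrongModuleOn δ Set.univ (cls x) := by
    intro x
    refine ⟨cls_mod x, fun W hW => ?_⟩
    by_contra hcon
    push_neg at hcon
    obtain ⟨h1, h2', h3⟩ := hcon
    obtain ⟨a, ha⟩ := h3
    obtain ⟨b, hb, hbW⟩ : ∃ b ∈ cls x, b ∉ W := by
      by_contra hbc; push_neg at hbc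
      exact h1 (Set.inter_eq_left.2 hbc)
    obtain ⟨w, hwW, hwc⟩ : ∃ w ∈ W, w ∉ cls x := by
      by_contra hwc; push_neg at hwc
      exact h2' (Set.inter_eq_right.2 hwc)
    have key : ∀ a' ∈ cls x ∩ W, ∀ b' ∈ cls x, b' ∉ W → δ a' b' = c := by
      intro a' ha' b' hb' hb'W
      have hw : δ a' b' = δ w b' := hW.2 a' ha'.2 w hwW b' ⟨Set.mem_univ _, hb'W⟩
      have hwb' : w ≠ b' := fun h => hwc (h ▸ hb')
      rw [hw, hsym w b' hwb', hedge hb' hwc]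
    have hRab : Relation.ReflTransGen e a b := (hRsymm ha.1).trans hb
    obtain ⟨p, q, hp, hq, hpq⟩ :=
      rtg_crossing_gen (fun t => t ∈ cls x ∩ W) hRab ha (fun h => hbW h.2)
    have hqcls : q ∈ cls x := Relation.ReflTransGen.tail hp.1 hpq
    have hqW : q ∉ W := fun h => hq ⟨hqcls, h⟩
    exact hpq.2 (key p hp q hqcls hqW)
  have cls_proper : ∀ x : X, cls x ≠ Set.univ := by
    intro x h
    have hx0 : Relation.ReflTransGen e x x0 := by
      have : x0 ∈ cls x := by rw [h]; trivial
      exact this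
    have hy0 : Relation.ReflTransGen e x y0 := by
      have : y0 ∈ cls x := by rw [h]; trivial
      exact this
    exact hdis ((hRsymm hx0).trans hy0)
  have mmax_eq_cls : ∀ {M : Set X}, M ∈ Mmax δ Set.univ → ∀ {x : X}, x ∈ M → M = cls x := by
    intro M hM x hx
    have step1 : ∀ a ∈ M, ∀ b ∈ M, Relation.ReflTransGen e a b := by
      intro a ha b hb
      by_contra hab
      have hbK : b ∈ cls b := Relation.ReflTransGen.refl
      have haK : a ∉ cls b := fun h => hab (hRsymm h)
      rcases hM.1.2 (Set.univ \ cls b) (compl_mod b) with h | h | h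
      · rw [Set.inter_eq_left] at h
        exact (h hb).2 hbK
      · rw [Set.inter_eq_right] at h
        rcases hM.1.2 (cls b) (cls_mod b) with h' | h' | h'
        · rw [Set.inter_eq_left] at h'
          exact haK (h' ha)
        · rw [Set.inter_eq_right] at h'
          apply hM.2.1
          apply Set.eq_univ_of_univ_subset
          intro z _
          by_cases hz : z ∈ cls b
          · exact h' hz
          · exact h ⟨Set.mem_univ z, hz⟩
        · exact absurd (h' ▸ (show b ∈ M ∩ cls b from ⟨hb, hbK⟩)) (Set.notMem_empty b)
      · exact absurd (h ▸ (show a ∈ M ∩ (Set.univ \ cls b) from ⟨ha, Set.mem_univ a, haK⟩))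
          (Set.notMem_empty a)
    have hsubcls : M ⊆ cls x := fun b hb => step1 x hx b hb
    exact (hM.2.2 (cls x) (cls_strong x) (cls_proper x) hsubcls).symm
  have key2 : ∀ {P Q : Set X} {a b : X}, P ∈ Mmax δ Set.univ → Q ∈ Mmax δ Set.univ →
      P ≠ Q → a ∈ P → b ∈ Q → δ a b = c := by
    intro P Q a b hP hQ hPQ haP hbQ
    have hPa : P = cls a := mmax_eq_cls hP haP
    have hQb : Q = cls b := mmax_eq_cls hQ hbQ
    have hnab : ¬ Relation.ReflTransGen e a b := by
      intro h
      apply hPQ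
      rw [hPa, hQb]
      ext z
      exact ⟨fun hz => (hRsymm h).trans hz, fun hz => h.trans hz⟩
    have hab : a ≠ b := fun h => hnab (h ▸ Relation.ReflTransGen.refl)
    by_contra hne
    have hne' : δ a b ≠ c := fun hcc => hne hcc
    exact hnab (Relation.ReflTransGen.single ⟨hab, fun hcc => hne hcc⟩)
  intro M hM N hN M' hM' N' hN' hMN hM'N' x hx y hy x' hx' y' hy'
  rw [key2 hM hN hMN hx hy, key2 hM' hN' hM'N' hx' hy']
end LemA


section LemB
variable {X Υ : Type*} [Fintype X] (δ : X → X → Υ)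

lemma lemB (h2 : 2 ≤ Fintype.card X)
    (hsym : ∀ x y : X, x ≠ y → δ x y = δ y x)
    (hnp : ¬ QuotientPrime δ Set.univ) :
    ∃ (c : Υ) (x0 y0 : X), ¬ Relation.ReflTransGen (fun a b => a ≠ b ∧ δ a b ≠ c) x0 y0 := by
  classical
  unfold QuotientPrime at hnp
  push_neg at hnp
  obtain ⟨𝒮, h𝒮sub, h𝒮mod, h𝒮ne, h𝒮nmax, h𝒮nsing⟩ := hnp
  obtain ⟨M1, hM1⟩ := h𝒮ne
  obtain ⟨M2, hM2, hM21⟩ : ∃ M2 ∈ 𝒮, M2 ≠ M1 := by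
    by_contra hcc; push_neg at hcc
    refine h𝒮nsing M1 ?_
    ext T
    exact ⟨fun hT => hcc T hT, fun hT => (Set.mem_singleton_iff.1 hT) ▸ hM1⟩
  set U : Set X := ⋃₀ 𝒮 with hU
  have hUmod : IsModuleOn δ Set.univ U := by
    refine ⟨Set.subset_univ _, ?_⟩
    intro x hx y hy z hz
    obtain ⟨Mx, hMx, hxM⟩ := hx
    obtain ⟨My, hMy, hyM⟩ := hy
    obtain ⟨N, hN, hzN⟩ := exists_mmax_mem δ h2 z
    have hN𝒮 : N ∉ 𝒮 := fun h => hz.2 ⟨N, h, hzN⟩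
    exact h𝒮mod Mx hMx My hMy N ⟨hN, hN𝒮⟩ x hxM y hyM z hzN
  have hM1U : M1 ⊆ U := fun t ht => ⟨M1, hM1, ht⟩
  obtain ⟨m2, hm2⟩ := mmax_nonempty δ h2 (h𝒮sub hM2)
  have hm2U : m2 ∈ U := ⟨M2, hM2, hm2⟩
  have hm2M1 : m2 ∉ M1 := by
    intro h
    have := mmax_disj δ (h𝒮sub hM2) (h𝒮sub hM1) hM21
    exact Set.notMem_empty m2 (this ▸ (show m2 ∈ M2 ∩ M1 from ⟨hm2, h⟩))
  have hUne : U ≠ Set.univ := by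
    obtain ⟨N0, hN0, hN0𝒮⟩ : ∃ N0 ∈ Mmax δ Set.univ, N0 ∉ 𝒮 := by
      by_contra hcc; push_neg at hcc
      exact h𝒮nmax (Set.Subset.antisymm h𝒮sub hcc)
    obtain ⟨n0, hn0⟩ := mmax_nonempty δ h2 hN0
    intro h
    have hn0U : n0 ∈ U := h ▸ Set.mem_univ n0
    obtain ⟨M'', hM'', hn0M⟩ := hn0U
    have hne : M'' ≠ N0 := fun hh => hN0𝒮 (hh ▸ hM'')
    have := mmax_disj δ (h𝒮sub hM'') hN0 hne
    exact Set.notMem_empty n0 (this ▸ (show n0 ∈ M'' ∩ N0 from ⟨hn0M, hn0⟩))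
  -- maximal proper module strictly containing a maximal strong module
  obtain ⟨V, hV𝒫, hVmax⟩ := Set.Finite.exists_maximalFor id
    {V | IsModuleOn δ Set.univ V ∧ V ≠ Set.univ ∧
      ∃ M ∈ Mmax δ Set.univ, M ⊆ V ∧ M ≠ V}
    (Set.toFinite _)
    ⟨U, hUmod, hUne, M1, h𝒮sub hM1, hM1U, fun h => hm2M1 (h ▸ hm2U)⟩
  obtain ⟨hVmod, hVne, M, hMmm, hMV, hMneV⟩ := hV𝒫
  have hVnotstrong : ¬ IsStrongModuleOn δ Set.univ V := by
    intro hstr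
    exact hMneV (hMmm.2.2 V hstr hVne hMV).symm
  obtain ⟨W, hWmod, hVW1, hVW2, hVW3⟩ :
      ∃ W, IsModuleOn δ Set.univ W ∧ V ∩ W ≠ V ∧ V ∩ W ≠ W ∧ V ∩ W ≠ ∅ := by
    unfold IsStrongModuleOn at hVnotstrong
    push_neg at hVnotstrong
    obtain ⟨W, hW, hne⟩ := hVnotstrong hVmod
    exact ⟨W, hW, hne.1, hne.2.1, Set.nonempty_iff_ne_empty.1 hne.2.2⟩
  obtain ⟨a0, ha0⟩ := Set.nonempty_iff_ne_empty.2 hVW3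
  obtain ⟨u0, hu0V, hu0W⟩ : ∃ u0 ∈ V, u0 ∉ W := by
    by_contra hcc; push_neg at hcc
    exact hVW1 (Set.inter_eq_left.2 hcc)
  obtain ⟨w0, hw0W, hw0V⟩ : ∃ w0 ∈ W, w0 ∉ V := by
    by_contra hcc; push_neg at hcc
    exact hVW2 (Set.inter_eq_right.2 hcc)
  -- V ∪ W is a module
  have hTmod : IsModuleOn δ Set.univ (V ∪ W) := by
    refine ⟨Set.subset_univ _, ?_⟩
    intro x hx y hy z hz
    have hzV : z ∉ V := fun h => hz.2 (Or.inl h)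
    have hzW : z ∉ W := fun h => hz.2 (Or.inr h)
    have hxa : δ x z = δ a0 z := by
      rcases hx with hx | hx
      · exact hVmod.2 x hx a0 ha0.1 z ⟨Set.mem_univ z, hzV⟩
      · exact hWmod.2 x hx a0 ha0.2 z ⟨Set.mem_univ z, hzW⟩
    have hya : δ y z = δ a0 z := by
      rcases hy with hy | hy
      · exact hVmod.2 y hy a0 ha0.1 z ⟨Set.mem_univ z, hzV⟩
      · exact hWmod.2 y hy a0 ha0.2 z ⟨Set.mem_univ z, hzW⟩
    rw [hxa, hya]
  have hTuniv : V ∪ W = Set.univ := by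
    by_contra hTne
    have hVT : V ⊆ V ∪ W := Set.subset_union_left
    have h5 : id V = id (V ∪ W) := Set.Subset.antisymm hVT (hVmax
      ⟨hTmod, hTne, M, hMmm, hMV.trans hVT, by
        intro h
        have hw : w0 ∈ M := by rw [h]; exact Or.inr hw0W
        exact hw0V (hMV hw)⟩ hVT)
    simp only [id] at h5
    have hw : w0 ∈ V := by rw [h5]; exact Or.inr hw0W
    exact hw0V hw
  set c := δ a0 w0 with hc
  -- cross labels
  have cross1 : ∀ x ∈ V, ∀ y ∈ W, y ∉ V → δ x y = c := by
    intro x hx y hyW hyV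
    have h1 : δ x y = δ a0 y := hVmod.2 x hx a0 ha0.1 y ⟨Set.mem_univ y, hyV⟩
    have h2' : δ a0 y = δ u0 y := hVmod.2 a0 ha0.1 u0 hu0V y ⟨Set.mem_univ y, hyV⟩
    have h3 : δ y u0 = δ w0 u0 := hWmod.2 y hyW w0 hw0W u0 ⟨Set.mem_univ u0, hu0W⟩
    have hyu : y ≠ u0 := fun h => hyV (h ▸ hu0V)
    have hwu : w0 ≠ u0 := fun h => hw0V (h ▸ hu0V)
    have h4 : δ u0 y = δ u0 w0 := by
      rw [hsym u0 y hyu.symm, hsym u0 w0 hwu.symm, h3]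
    have h5 : δ a0 w0 = δ u0 w0 := hVmod.2 a0 ha0.1 u0 hu0V w0 ⟨Set.mem_univ w0, hw0V⟩
    rw [h1, h2', h4, hc, h5]
  have cross2 : ∀ x ∈ V ∩ W, ∀ u ∈ V, u ∉ W → δ x u = c := by
    intro x hx u huV huW
    have h1 : δ x u = δ w0 u := hWmod.2 x hx.2 w0 hw0W u ⟨Set.mem_univ u, huW⟩
    have huw : u ≠ w0 := fun h => huW (h ▸ hw0W)
    rw [h1, ← hsym u w0 huw, cross1 u huV w0 hw0W hw0V]
  -- disconnection
  refine ⟨c, a0, w0, ?_⟩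
  have hinv : ∀ z, Relation.ReflTransGen (fun a b => a ≠ b ∧ δ a b ≠ c) a0 z → z ∈ V ∩ W := by
    intro z hz
    induction hz with
    | refl => exact ha0
    | @tail p q hp hpq ih =>
      by_contra hq
      have hqT : q ∈ V ∪ W := hTuniv ▸ Set.mem_univ q
      rcases hqT with hqV | hqW
      · have hqW : q ∉ W := fun h => hq ⟨hqV, h⟩
        exact hpq.2 (cross2 p ih q hqV hqW)
      · by_cases hqV : q ∈ V
        · exact hq ⟨hqV, hqW⟩
        · exact hpq.2 (cross1 p ih.1 q hqW hqV)
  intro h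
  exact hw0V (hinv w0 h).1
end LemB


section LemD
lemma lemD {X Υ : Type*} [Fintype X] (h2 : 2 ≤ Fintype.card X) (δ : X → X → Υ)
    (hsym : ∀ x y : X, x ≠ y → δ x y = δ y x) (hsu : SymbolicUltrametric δ) :
    ∃ (c : Υ) (x0 y0 : X), ¬ Relation.ReflTransGen (fun a b => a ≠ b ∧ δ a b ≠ c) x0 y0 := by
  classical
  obtain ⟨hU1, hU2⟩ := hsu
  obtain ⟨c, hconn⟩ := exists_conn_color h2 δ hsym hU2
  by_contra hcon
  push_neg at hcon
  set r : X → X → Prop := fun a b => a ≠ b ∧ δ a b = c with hr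
  set s : X → X → Prop := fun a b => a ≠ b ∧ δ a b ≠ c with hs
  have hrsym : ∀ x y, r x y → r y x := by
    rintro x y ⟨h1, hh⟩; exact ⟨h1.symm, by rw [← hsym x y h1]; exact hh⟩
  have hssym : ∀ x y, s x y → s y x := by
    rintro x y ⟨h1, hh⟩; exact ⟨h1.symm, by rw [← hsym x y h1]; exact hh⟩
  have hrirr : ∀ x y, r x y → x ≠ y := fun x y h => h.1
  have hsirr : ∀ x y, s x y → x ≠ y := fun x y h => h.1
  have htot : ∀ x y : X, x ≠ y → r x y ∨ s x y := by
    intro x y h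
    by_cases hcc : δ x y = c
    · exact .inl ⟨h, hcc⟩
    · exact .inr ⟨h, hcc⟩
  have hexcl : ∀ x y, r x y → s x y → False := fun x y h1 h2' => h2'.2 h1.2
  have hP4r : ∀ v a b u, r v a → r a b → r v u → s v b → s b u → s a u → False := by
    rintro v a b u ⟨hva, hva2⟩ ⟨hab, hab2⟩ ⟨hvu, hvu2⟩ ⟨hvb, hvb2⟩ ⟨hbu, hbu2⟩ ⟨hau, hau2⟩
    have hbv2 : δ b v ≠ c := by rw [hsym b v (Ne.symm hvb)]; exact hvb2
    have t1 : δ b v = δ b u := by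
      rcases two_of_three (hU2 b v u (Ne.symm hvb) hbu hvu) with h | h | h
      · exact h
      · exact absurd (h.trans hvu2) hbv2
      · exact absurd (h.trans hvu2) hbu2
    have t2 : δ a u = δ b u := by
      rcases two_of_three (hU2 a b u hab hau hbu) with h | h | h
      · rw [hab2] at h; exact absurd h.symm hau2
      · rw [hab2] at h; exact absurd h.symm hbu2
      · exact h
    apply hU1
    refine ⟨b, a, v, u, Ne.symm hab, Ne.symm hvb, hbu, Ne.symm hva, hau, hvu,
      ?_, ?_, ?_, ?_, ?_⟩
    · rw [hsym b a (Ne.symm hab), hsym a v (Ne.symm hva), hab2, hva2]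
    · rw [hsym a v (Ne.symm hva), hva2, hvu2]
    · exact t2
    · exact t1.symm
    · rw [hsym b a (Ne.symm hab), hab2]
      exact fun h => hau2 h.symm
  have hP4s : ∀ v a b u, s v a → s a b → s v u → r v b → r b u → r a u → False := by
    rintro v a b u ⟨hva, hva2⟩ ⟨hab, hab2⟩ ⟨hvu, hvu2⟩ ⟨hvb, hvb2⟩ ⟨hbu, hbu2⟩ ⟨hau, hau2⟩
    have hav2 : δ a v ≠ c := fun h => hva2 (by rw [hsym v a hva]; exact h)
    have hbv2 : δ b v = c := by rw [hsym b v (Ne.symm hvb)]; exact hvb2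
    have p1 : δ a b = δ a v := by
      rcases two_of_three (hU2 a b v hab (Ne.symm hva) (Ne.symm hvb)) with h | h | h
      · exact h
      · exact absurd (h.trans hbv2) hab2
      · exact absurd (h.trans hbv2) hav2
    have p2 : δ a v = δ v u := by
      rcases two_of_three (hU2 a v u (Ne.symm hva) hau hvu) with h | h | h
      · exact absurd (h.trans hau2) hav2
      · exact h
      · rw [hau2] at h; exact absurd h.symm hvu2
    apply hU1
    refine ⟨b, a, v, u, Ne.symm hab, Ne.symm hvb, hbu, Ne.symm hva, hau, hvu,
      ?_, ?_, ?_, ?_, ?_⟩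
    · rw [hsym b a (Ne.symm hab)]; exact p1
    · exact p2
    · rw [hau2, hbu2]
    · rw [hbu2, hbv2]
    · rw [hsym b a (Ne.symm hab), hau2]
      exact hab2
  have hconnr : ConnOn r Finset.univ := fun x _ y _ =>
    Relation.ReflTransGen.mono (r := r) (p := ROn r Finset.univ) (fun (a b : X) (h : r a b) => (⟨Finset.mem_univ a, Finset.mem_univ b, h⟩ : ROn r Finset.univ a b)) x y (hconn x y)
  have hconns : ConnOn s Finset.univ := fun x _ y _ =>
    Relation.ReflTransGen.mono (r := s) (p := ROn s Finset.univ) (fun (a b : X) (h : s a b) => (⟨Finset.mem_univ a, Finset.mem_univ b, h⟩ : ROn s Finset.univ a b)) x y (hcon c x y)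
  exact no_both_conn hrsym hssym hrirr hsirr htot hexcl hP4r hP4s
    (Fintype.card X) Finset.univ (le_of_eq Finset.card_univ)
    (by rw [Finset.card_univ]; exact h2) hconnr hconns
end LemD

/-- For a symmetric map `δ` on a finite set `X` with `|X| ≥ 2`, the
quotient `δ / Mmax(δ)` is either complete or prime; moreover, if `δ` is a symbolic
ultrametric then this quotient is complete. -/
theorem stmt_12 {X Υ : Type*} [Fintype X] (h2 : 2 ≤ Fintype.card X)
    (δ : X → X → Υ) (hsym : ∀ x y : X, x ≠ y → δ x y = δ y x) :
    (QuotientComplete δ Set.univ ∨ QuotientPrime δ Set.univ) ∧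
    (SymbolicUltrametric δ → QuotientComplete δ Set.univ) := by
  constructor
  · by_cases hp : QuotientPrime δ Set.univ
    · exact .inr hp
    · obtain ⟨c, x0, y0, h⟩ := lemB δ h2 hsym hp
      exact .inl (lemA δ h2 hsym h)
  · intro hsu
    obtain ⟨c, x0, y0, h⟩ := lemD h2 δ hsym hsu
    exact lemA δ h2 hsym h
end
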